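/- arXiv:2605.10300 — 4 statements merged into one kernel-verified Lean document; each statement's English description precedes it below -/
import Mathlib

section
/- The double sum H(q) := Σ_{n≥0} (−1)^n q^{3n²+2n} (1+q^{2n+1}) Σ_{|j|≤n} (−1)^j q^{−j²} can be rewritten as H(q) = Σ_{n+j≥0, n−j≥0} (−1)^{n+j} q^{3n²−j²+2n} − Σ_{n+j<0, n−j<0} (−1)^{n+j} q^{3n²−j²+2n}, where the sums run over integers n,j (each sum converges absolutely for |q|<1). -/
open scoped BigOperators

/-- `H(q) = Σ_{n ≥ 0} (−1)ⁿ q^{3n²+2n}(1 + q^{2n+1}) Σ_{|j| ≤ n} (−1)ʲ q^{−j²}`. -/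
noncomputable def Hq (q : ℂ) : ℂ :=
  ∑' n : ℕ, (-1 : ℂ) ^ n * q ^ (3 * n ^ 2 + 2 * n) * (1 + q ^ (2 * n + 1)) *
    ∑ j ∈ Finset.Icc (-(n : ℤ)) (n : ℤ), (-1 : ℂ) ^ j * q ^ (-j ^ 2)

open Set Function

namespace HqAux

noncomputable def F (q : ℂ) (p : ℤ × ℤ) : ℂ :=
  (-1 : ℂ) ^ (p.1 + p.2) * q ^ (3 * p.1 ^ 2 - p.2 ^ 2 + 2 * p.1)

def SA : Set (ℤ × ℤ) := {p | 0 ≤ p.1 + p.2 ∧ 0 ≤ p.1 - p.2}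

def SB : Set (ℤ × ℤ) := {p | p.1 + p.2 < 0 ∧ p.1 - p.2 < 0}

lemma summable_geom_prod {r : ℝ} (h0 : 0 ≤ r) (h1 : r < 1) :
    Summable (fun p : ℤ × ℤ => r ^ (p.1.natAbs + p.2.natAbs)) := by
  have hg : Summable (fun n : ℤ => r ^ n.natAbs) := by
    apply Summable.of_nat_of_neg <;> simpa using summable_geometric_of_lt_one h0 h1
  have := hg.mul_of_nonneg hg (fun _ => pow_nonneg h0 _) (fun _ => pow_nonneg h0 _)
  simpa [pow_add] using this

lemma summable_indicator (q : ℂ) (hq : ‖q‖ < 1) (s : Set (ℤ × ℤ))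
    (hs : ∀ p ∈ s, (p.1.natAbs + p.2.natAbs : ℤ) ≤ 3 * p.1 ^ 2 - p.2 ^ 2 + 2 * p.1) :
    Summable (s.indicator (F q)) := by
  apply Summable.of_norm_bounded (summable_geom_prod (norm_nonneg q) hq)
  intro p
  by_cases hp : p ∈ s
  · rw [Set.indicator_of_mem hp]
    have he : (0 : ℤ) ≤ 3 * p.1 ^ 2 - p.2 ^ 2 + 2 * p.1 :=
      le_trans (by positivity) (hs p hp)
    have heq : ((3 * p.1 ^ 2 - p.2 ^ 2 + 2 * p.1).toNat : ℤ) = 3 * p.1 ^ 2 - p.2 ^ 2 + 2 * p.1 :=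
      Int.toNat_of_nonneg he
    have hle : p.1.natAbs + p.2.natAbs ≤ (3 * p.1 ^ 2 - p.2 ^ 2 + 2 * p.1).toNat := by
      have := hs p hp
      omega
    rw [F, ← heq, zpow_natCast, norm_mul, norm_zpow, norm_neg, norm_one, one_zpow, one_mul,
      norm_pow]
    exact pow_le_pow_of_le_one (norm_nonneg q) hq.le hle
  · rw [Set.indicator_of_notMem hp]
    simp [pow_nonneg (norm_nonneg q)]

lemma summable_A (q : ℂ) (hq : ‖q‖ < 1) : Summable (SA.indicator (F q)) := by
  apply summable_indicator q hq
  rintro ⟨n, j⟩ ⟨h1, h2⟩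
  simp only at h1 h2 ⊢
  have hn : 0 ≤ n := by omega
  have hj : |j| ≤ n := abs_le.2 ⟨by omega, by omega⟩
  have h3 : (n.natAbs : ℤ) = n := Int.natAbs_of_nonneg hn
  have h4 : (j.natAbs : ℤ) = |j| := Int.abs_eq_natAbs j ▸ rfl
  have hj2 : j ^ 2 ≤ n ^ 2 := by
    have := sq_abs j
    nlinarith [mul_self_le_mul_self (abs_nonneg j) hj, abs_nonneg j]
  push_cast [h3, h4]
  nlinarith [abs_nonneg j]

lemma summable_B (q : ℂ) (hq : ‖q‖ < 1) : Summable (SB.indicator (F q)) := by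
  apply summable_indicator q hq
  rintro ⟨n, j⟩ ⟨h1, h2⟩
  simp only at h1 h2 ⊢
  have hn : n < 0 := by omega
  have hj : |j| ≤ -n - 1 := abs_le.2 ⟨by omega, by omega⟩
  have h3 : (n.natAbs : ℤ) = -n := by omega
  have h4 : (j.natAbs : ℤ) = |j| := Int.abs_eq_natAbs j ▸ rfl
  have hj2 : j ^ 2 ≤ (-n - 1) ^ 2 := by
    have := sq_abs j
    nlinarith [mul_self_le_mul_self (abs_nonneg j) hj, abs_nonneg j]
  push_cast [h3, h4]
  nlinarith [abs_nonneg j]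

lemma gA_eq (q : ℂ) (m : ℕ) :
    ∑' j : ℤ, SA.indicator (F q) ((m : ℤ), j)
      = ∑ j ∈ Finset.Icc (-(m : ℤ)) (m : ℤ), F q ((m : ℤ), j) := by
  rw [tsum_eq_sum (s := Finset.Icc (-(m : ℤ)) (m : ℤ))]
  · exact Finset.sum_congr rfl fun j hj => by
      rw [Finset.mem_Icc] at hj
      exact Set.indicator_of_mem (by constructor <;> [omega; omega]) _
  · intro j hj
    rw [Finset.mem_Icc] at hj
    exact Set.indicator_of_notMem (fun h => by
      obtain ⟨h1, h2⟩ := h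
      simp only [SA, Set.mem_setOf_eq] at h1 h2
      omega) _

lemma gA_neg (q : ℂ) (n : ℤ) (hn : n < 0) :
    ∑' j : ℤ, SA.indicator (F q) (n, j) = 0 := by
  have : ∀ j : ℤ, SA.indicator (F q) (n, j) = 0 := fun j =>
    Set.indicator_of_notMem (fun h => by
      obtain ⟨h1, h2⟩ := h
      simp only [SA, Set.mem_setOf_eq] at h1 h2
      omega) _
  simp [this]

lemma gB_eq (q : ℂ) (m : ℕ) :
    ∑' j : ℤ, SB.indicator (F q) ((-(m : ℤ) - 1), j)
      = ∑ j ∈ Finset.Icc (-(m : ℤ)) (m : ℤ), F q ((-(m : ℤ) - 1), j) := by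
  rw [tsum_eq_sum (s := Finset.Icc (-(m : ℤ)) (m : ℤ))]
  · exact Finset.sum_congr rfl fun j hj => by
      rw [Finset.mem_Icc] at hj
      exact Set.indicator_of_mem (by constructor <;> [omega; omega]) _
  · intro j hj
    rw [Finset.mem_Icc] at hj
    exact Set.indicator_of_notMem (fun h => by
      obtain ⟨h1, h2⟩ := h
      simp only [SB, Set.mem_setOf_eq] at h1 h2
      omega) _

lemma gB_nonneg (q : ℂ) (n : ℤ) (hn : 0 ≤ n) :
    ∑' j : ℤ, SB.indicator (F q) (n, j) = 0 := by
  have : ∀ j : ℤ, SB.indicator (F q) (n, j) = 0 := fun j =>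
    Set.indicator_of_notMem (fun h => by
      obtain ⟨h1, h2⟩ := h
      simp only [SB, Set.mem_setOf_eq] at h1 h2
      omega) _
  simp [this]

/-- Termwise identity for `q ≠ 0`. -/
lemma term_eq_ne_zero (q : ℂ) (hq0 : q ≠ 0) (m : ℕ) (j : ℤ) :
    (-1 : ℂ) ^ m * q ^ (3 * m ^ 2 + 2 * m) * (1 + q ^ (2 * m + 1)) *
        ((-1 : ℂ) ^ j * q ^ (-j ^ 2))
      = F q ((m : ℤ), j) - F q ((-(m : ℤ) - 1), j) := by
  have hpm1 : (-1 : ℂ) ≠ 0 := by norm_num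
  have h1 : (-1 : ℂ) ^ ((m : ℤ) + j) = (-1 : ℂ) ^ m * (-1 : ℂ) ^ j := by
    rw [zpow_add₀ hpm1, zpow_natCast]
  have hodd : (-1 : ℂ) ^ ((2 * m + 1 : ℕ) : ℤ) = -1 := by
    rw [zpow_natCast, pow_succ, pow_mul]
    norm_num
  have h2 : (-1 : ℂ) ^ ((-(m : ℤ) - 1) + j) = -((-1 : ℂ) ^ m * (-1 : ℂ) ^ j) := by
    have he : (-(m : ℤ) - 1) + j = ((m : ℤ) + j) + (-(((2 * m + 1 : ℕ) : ℤ))) := by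
      push_cast; ring
    rw [he, zpow_add₀ hpm1, h1, zpow_neg, hodd]
    ring
  have h3 : q ^ (3 * ((m : ℤ)) ^ 2 - j ^ 2 + 2 * (m : ℤ))
      = q ^ (3 * m ^ 2 + 2 * m) * q ^ (-j ^ 2) := by
    rw [show 3 * ((m : ℤ)) ^ 2 - j ^ 2 + 2 * (m : ℤ)
        = ((3 * m ^ 2 + 2 * m : ℕ) : ℤ) + (-j ^ 2) by push_cast; ring,
      zpow_add₀ hq0, zpow_natCast]
  have h4 : q ^ (3 * (-(m : ℤ) - 1) ^ 2 - j ^ 2 + 2 * (-(m : ℤ) - 1))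
      = q ^ (3 * m ^ 2 + 2 * m) * q ^ (2 * m + 1) * q ^ (-j ^ 2) := by
    rw [show 3 * (-(m : ℤ) - 1) ^ 2 - j ^ 2 + 2 * (-(m : ℤ) - 1)
        = (((3 * m ^ 2 + 2 * m : ℕ) : ℤ) + ((2 * m + 1 : ℕ) : ℤ)) + (-j ^ 2) by push_cast; ring,
      zpow_add₀ hq0, zpow_add₀ hq0, zpow_natCast, zpow_natCast]
  simp only [F]
  rw [h1, h2, h3, h4]
  ring

/-- Termwise identity summed over `j`, any `q`. -/
lemma term_eq (q : ℂ) (m : ℕ) :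
    (-1 : ℂ) ^ m * q ^ (3 * m ^ 2 + 2 * m) * (1 + q ^ (2 * m + 1)) *
        ∑ j ∈ Finset.Icc (-(m : ℤ)) (m : ℤ), (-1 : ℂ) ^ j * q ^ (-j ^ 2)
      = (∑ j ∈ Finset.Icc (-(m : ℤ)) (m : ℤ), F q ((m : ℤ), j))
        - ∑ j ∈ Finset.Icc (-(m : ℤ)) (m : ℤ), F q ((-(m : ℤ) - 1), j) := by
  by_cases hq0 : q = 0
  · subst hq0
    rcases Nat.eq_zero_or_pos m with hm | hm
    · subst hm
      simp [F, zero_zpow]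
    · have hL : (0 : ℂ) ^ (3 * m ^ 2 + 2 * m) = 0 :=
        zero_pow (by positivity)
      rw [hL]
      have hA : ∀ j ∈ Finset.Icc (-(m : ℤ)) (m : ℤ), F (0 : ℂ) ((m : ℤ), j) = 0 := by
        intro j hj
        rw [Finset.mem_Icc] at hj
        have hj2 : j ^ 2 ≤ (m : ℤ) ^ 2 := by nlinarith [hj.1, hj.2]
        have : 3 * ((m : ℤ)) ^ 2 - j ^ 2 + 2 * (m : ℤ) ≠ 0 := by
          have hm' : (1 : ℤ) ≤ (m : ℤ) := by exact_mod_cast hm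
          nlinarith
        simp [F, zero_zpow _ this]
      have hB : ∀ j ∈ Finset.Icc (-(m : ℤ)) (m : ℤ), F (0 : ℂ) ((-(m : ℤ) - 1), j) = 0 := by
        intro j hj
        rw [Finset.mem_Icc] at hj
        have hj2 : j ^ 2 ≤ (m : ℤ) ^ 2 := by nlinarith [hj.1, hj.2]
        have : 3 * (-(m : ℤ) - 1) ^ 2 - j ^ 2 + 2 * (-(m : ℤ) - 1) ≠ 0 := by
          nlinarith
        simp [F, zero_zpow _ this]
      rw [Finset.sum_eq_zero hA, Finset.sum_eq_zero hB]
      ring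
  · rw [Finset.mul_sum, ← Finset.sum_sub_distrib]
    exact Finset.sum_congr rfl fun j _ => term_eq_ne_zero q hq0 m j

end HqAux

open HqAux in
/-- `H(q)` equals the bilateral Hecke-type double sum
`Σ_{n+j ≥ 0, n−j ≥ 0} (−1)^{n+j} q^{3n²−j²+2n} − Σ_{n+j < 0, n−j < 0} (−1)^{n+j} q^{3n²−j²+2n}`. -/
theorem stmt2 (q : ℂ) (hq : ‖q‖ < 1) :
    Hq q =
      (∑' p : {p : ℤ × ℤ // 0 ≤ p.1 + p.2 ∧ 0 ≤ p.1 - p.2},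
          (-1 : ℂ) ^ ((p : ℤ × ℤ).1 + (p : ℤ × ℤ).2) *
            q ^ (3 * (p : ℤ × ℤ).1 ^ 2 - (p : ℤ × ℤ).2 ^ 2 + 2 * (p : ℤ × ℤ).1)) -
      ∑' p : {p : ℤ × ℤ // p.1 + p.2 < 0 ∧ p.1 - p.2 < 0},
          (-1 : ℂ) ^ ((p : ℤ × ℤ).1 + (p : ℤ × ℤ).2) *
            q ^ (3 * (p : ℤ × ℤ).1 ^ 2 - (p : ℤ × ℤ).2 ^ 2 + 2 * (p : ℤ × ℤ).1) := by
  classical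
  have hsumA := summable_A q hq
  have hsumB := summable_B q hq
  -- the two subtype sums as indicator sums
  have eA : (∑' p : {p : ℤ × ℤ // 0 ≤ p.1 + p.2 ∧ 0 ≤ p.1 - p.2},
      (-1 : ℂ) ^ ((p : ℤ × ℤ).1 + (p : ℤ × ℤ).2) *
        q ^ (3 * (p : ℤ × ℤ).1 ^ 2 - (p : ℤ × ℤ).2 ^ 2 + 2 * (p : ℤ × ℤ).1))
      = ∑' x : ℤ × ℤ, SA.indicator (F q) x := tsum_subtype SA (F q)
  have eB : (∑' p : {p : ℤ × ℤ // p.1 + p.2 < 0 ∧ p.1 - p.2 < 0},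
      (-1 : ℂ) ^ ((p : ℤ × ℤ).1 + (p : ℤ × ℤ).2) *
        q ^ (3 * (p : ℤ × ℤ).1 ^ 2 - (p : ℤ × ℤ).2 ^ 2 + 2 * (p : ℤ × ℤ).1))
      = ∑' x : ℤ × ℤ, SB.indicator (F q) x := tsum_subtype SB (F q)
  -- Fubini
  have fA : (∑' x : ℤ × ℤ, SA.indicator (F q) x)
      = ∑' n : ℤ, ∑' j : ℤ, SA.indicator (F q) (n, j) :=
    Summable.tsum_prod' hsumA hsumA.prod_factor
  have fB : (∑' x : ℤ × ℤ, SB.indicator (F q) x)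
      = ∑' n : ℤ, ∑' j : ℤ, SB.indicator (F q) (n, j) :=
    Summable.tsum_prod' hsumB hsumB.prod_factor
  -- restrict to the supporting copies of ℕ
  have rA : (∑' n : ℤ, ∑' j : ℤ, SA.indicator (F q) (n, j))
      = ∑' m : ℕ, ∑' j : ℤ, SA.indicator (F q) ((m : ℤ), j) := by
    refine (Function.Injective.tsum_eq (g := fun m : ℕ => (m : ℤ)) Nat.cast_injective ?_).symm
    intro n hn
    rcases lt_or_ge n 0 with h | h
    · exact absurd (gA_neg q n h) hn
    · exact ⟨n.toNat, by simp [Int.toNat_of_nonneg h]⟩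
  have rB : (∑' n : ℤ, ∑' j : ℤ, SB.indicator (F q) (n, j))
      = ∑' m : ℕ, ∑' j : ℤ, SB.indicator (F q) ((-(m : ℤ) - 1), j) := by
    refine (Function.Injective.tsum_eq (g := fun m : ℕ => -(m : ℤ) - 1)
      (fun a b h => by simp only at h; omega) ?_).symm
    intro n hn
    rcases lt_or_ge n 0 with h | h
    · exact ⟨(-n - 1).toNat, by simp only; omega⟩
    · exact absurd (gB_nonneg q n h) hn
  -- summability of the two ℕ-indexed series
  have hSA : Summable (fun m : ℕ => ∑ j ∈ Finset.Icc (-(m : ℤ)) (m : ℤ), F q ((m : ℤ), j)) := by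
    have h1 : Summable (fun n : ℤ => ∑' j : ℤ, SA.indicator (F q) (n, j)) := hsumA.prod
    have h2 := h1.comp_injective (i := fun m : ℕ => (m : ℤ)) Nat.cast_injective
    exact h2.congr fun m => gA_eq q m
  have hSB : Summable
      (fun m : ℕ => ∑ j ∈ Finset.Icc (-(m : ℤ)) (m : ℤ), F q ((-(m : ℤ) - 1), j)) := by
    have h1 : Summable (fun n : ℤ => ∑' j : ℤ, SB.indicator (F q) (n, j)) := hsumB.prod
    have h2 := h1.comp_injective (i := fun m : ℕ => -(m : ℤ) - 1) (fun a b h => by simp only at h; omega)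
    exact h2.congr fun m => gB_eq q m
  rw [eA, eB, fA, fB, rA, rB, tsum_congr (fun m : ℕ => gA_eq q m),
    tsum_congr (fun m : ℕ => gB_eq q m), ← Summable.tsum_sub hSA hSB]
  exact tsum_congr fun m => term_eq q m
end

section
/- The theta function Θ(τ) := Σ_{n∈ℤ} q^{n²} (with q = e^{2πiτ}, τ in the upper half-plane) satisfies Θ(τ) = η(2τ)⁵ / (η(τ)² η(4τ)²), where η(τ) := q^{1/24} Π_{n≥1} (1−q^n) is the Dedekind eta function. -/
open Complex

open scoped Real

/-- Dedekind eta function `η(τ) = e^{πiτ/12} ∏_{n ≥ 1} (1 − e^{2πinτ})`. -/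
noncomputable def dedekindEta (τ : ℂ) : ℂ :=
  Complex.exp (π * I * τ / 12) * ∏' n : ℕ, (1 - Complex.exp (2 * π * I * τ) ^ (n + 1))

/-- Theta function `Θ(τ) = Σ_{n ∈ ℤ} e^{2πi n² τ}`. -/
noncomputable def jacobiThetaQ (τ : ℂ) : ℂ :=
  ∑' n : ℤ, Complex.exp (2 * π * I * (n : ℂ) ^ 2 * τ)

section Stmt8Aux

open Finset Filter
open scoped Topology

noncomputable section
namespace Stmt8

def qf (p : ℂ) (m : ℕ) : ℂ := ∏ i ∈ Finset.range m, (1 - p ^ (i + 1))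
def gb (p : ℂ) (m : ℕ) (k : ℤ) : ℂ :=
  if 0 ≤ k ∧ k ≤ m then qf p m / (qf p k.toNat * qf p (m - k.toNat)) else 0
def Pinf (x : ℂ) : ℂ := ∏' n : ℕ, (1 - x ^ (n + 1))
def Einf (x : ℂ) : ℂ := ∏' n : ℕ, (1 + x ^ (n + 1))
def Oinf (x : ℂ) : ℂ := ∏' n : ℕ, (1 + x ^ (2 * n + 1))
def dd (q : ℂ) (m : ℕ) (n : ℤ) : ℂ := gb (q^2) (2*m) ((m : ℤ) + n) * q ^ (n^2)
def T (q : ℂ) (m : ℕ) : ℂ := ∑' n : ℤ, dd q m n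
def u (r : ℝ) (m : ℕ) : ℝ := ∏ i ∈ Finset.range m, (1 - r ^ (i + 1))
def v (r : ℝ) (m : ℕ) : ℝ := ∏ i ∈ Finset.range m, (1 + r ^ (i + 1))
def UU (p : ℂ) : ℝ := ‖Pinf ((‖p‖ : ℂ))‖
def VV (p : ℂ) : ℝ := ‖Einf ((‖p‖ : ℂ))‖

variable {p q x : ℂ} {g : ℕ → ℂ}

lemma one_sub_pow_ne (hp : ‖p‖ < 1) (i : ℕ) : 1 - p ^ (i + 1) ≠ 0 := by
  have : ‖p ^ (i + 1)‖ < 1 := by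
    rw [norm_pow]
    calc ‖p‖ ^ (i+1) ≤ ‖p‖ ^ 1 := pow_le_pow_of_le_one (norm_nonneg p) hp.le (by omega)
    _ < 1 := by simpa using hp
  intro h
  rw [sub_eq_zero] at h
  rw [← h] at this
  simp at this

lemma qf_ne (hp : ‖p‖ < 1) (m : ℕ) : qf p m ≠ 0 :=
  Finset.prod_ne_zero_iff.mpr fun i _ => one_sub_pow_ne hp i

lemma qf_succ (m : ℕ) : qf p (m + 1) = qf p m * (1 - p ^ (m + 1)) :=
  Finset.prod_range_succ _ m

lemma gb_neg {m : ℕ} {k : ℤ} (h : k < 0) : gb p m k = 0 := by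
  rw [gb, if_neg]; omega

lemma gb_gt {m : ℕ} {k : ℤ} (h : (m : ℤ) < k) : gb p m k = 0 := by
  rw [gb, if_neg]; omega

lemma gb_zero (hp : ‖p‖ < 1) (m : ℕ) : gb p m 0 = 1 := by
  rw [gb, if_pos (by omega)]
  simp [qf, div_self (qf_ne hp m)]
  exact qf_ne hp m

lemma gb_self (hp : ‖p‖ < 1) (m : ℕ) : gb p m m = 1 := by
  rw [gb, if_pos (by omega)]
  simp [qf]
  exact qf_ne hp m

lemma gb_nat (m j : ℕ) (h : j ≤ m) :
    gb p m j = qf p m / (qf p j * qf p (m - j)) := by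
  rw [gb, if_pos ⟨Int.ofNat_nonneg j, by exact_mod_cast h⟩, Int.toNat_natCast]

lemma gb_pascal₁ (hp : ‖p‖ < 1) (m : ℕ) (k : ℤ) :
    gb p (m + 1) k = gb p m k + p ^ ((m : ℤ) + 1 - k) * gb p m (k - 1) := by
  rcases lt_trichotomy k 0 with h | rfl | h
  · rw [gb_neg h, gb_neg h, gb_neg (by omega), mul_zero, add_zero]
  · rw [gb_zero hp, gb_zero hp, gb_neg (by omega), mul_zero, add_zero]
  rcases le_or_gt k (m : ℤ) with h2 | h2
  · obtain ⟨j, rfl⟩ := Int.eq_ofNat_of_zero_le h.le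
    obtain ⟨i, rfl⟩ : ∃ i, j = i + 1 := ⟨j - 1, by omega⟩
    obtain ⟨t, rfl⟩ : ∃ t, m = i + 1 + t := ⟨m - (i+1), by omega⟩
    have hc : (((i+1+t : ℕ) : ℤ) + 1 - ((i+1:ℕ):ℤ)) = ((t+1 : ℕ) : ℤ) := by push_cast; ring
    have hc2 : ((i+1:ℕ):ℤ) - 1 = ((i:ℕ):ℤ) := by push_cast; ring
    rw [hc, hc2, zpow_natCast, gb_nat _ _ (by omega), gb_nat _ _ (by omega),
      gb_nat _ _ (by omega),
      show i+1+t+1-(i+1) = t+1 by omega, show i+1+t-(i+1) = t by omega,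
      show i+1+t-i = t+1 by omega, qf_succ (i+1+t), qf_succ t, qf_succ i]
    have hpow : p ^ (t+1) * p ^ (i+1) = p ^ (i+1+t+1) := by rw [← pow_add]; congr 1; omega
    have h1 := qf_ne hp (i+1+t); have h2 := qf_ne hp i; have h3 := qf_ne hp t
    have h4 := one_sub_pow_ne hp i; have h5 := one_sub_pow_ne hp t
    field_simp
    linear_combination (qf p (i+1+t) * qf p i * qf p t) * hpow
  rcases eq_or_lt_of_le (by omega : (m : ℤ) + 1 ≤ k) with rfl | h3
  · rw [show ((m:ℤ)+1) = ((m+1 : ℕ) : ℤ) by push_cast; ring, gb_self hp,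
      gb_gt (by push_cast; omega), show ((m+1:ℕ):ℤ) - 1 = (m:ℤ) by push_cast; ring,
      gb_self hp]
    simp
  · rw [gb_gt (by push_cast; omega), gb_gt (by omega), gb_gt (by omega)]
    simp

lemma gb_pascal₂ (hp : ‖p‖ < 1) (m : ℕ) (k : ℤ) :
    gb p (m + 1) k = p ^ k * gb p m k + gb p m (k - 1) := by
  rcases lt_trichotomy k 0 with h | rfl | h
  · rw [gb_neg h, gb_neg h, gb_neg (by omega), mul_zero, add_zero]
  · rw [gb_zero hp, gb_zero hp, gb_neg (by omega), zpow_zero]; ring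
  rcases le_or_gt k (m : ℤ) with h2 | h2
  · obtain ⟨j, rfl⟩ := Int.eq_ofNat_of_zero_le h.le
    obtain ⟨i, rfl⟩ : ∃ i, j = i + 1 := ⟨j - 1, by omega⟩
    obtain ⟨t, rfl⟩ : ∃ t, m = i + 1 + t := ⟨m - (i+1), by omega⟩
    have hc2 : ((i+1:ℕ):ℤ) - 1 = ((i:ℕ):ℤ) := by push_cast; ring
    rw [hc2, zpow_natCast, gb_nat _ _ (by omega), gb_nat _ _ (by omega),
      gb_nat _ _ (by omega),
      show i+1+t+1-(i+1) = t+1 by omega, show i+1+t-(i+1) = t by omega,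
      show i+1+t-i = t+1 by omega, qf_succ (i+1+t), qf_succ t, qf_succ i]
    have hpow : p ^ (i+1) * p ^ (t+1) = p ^ (i+1+t+1) := by rw [← pow_add]; congr 1
    have h1 := qf_ne hp (i+1+t); have h2 := qf_ne hp i; have h3 := qf_ne hp t
    have h4 := one_sub_pow_ne hp i; have h5 := one_sub_pow_ne hp t
    field_simp
    linear_combination (qf p (i+1+t) * qf p i * qf p t) * hpow
  rcases eq_or_lt_of_le (by omega : (m : ℤ) + 1 ≤ k) with rfl | h3
  · rw [show ((m:ℤ)+1) = ((m+1 : ℕ) : ℤ) by push_cast; ring, gb_self hp,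
      gb_gt (by push_cast; omega), show ((m+1:ℕ):ℤ) - 1 = (m:ℤ) by push_cast; ring,
      gb_self hp]
    simp
  · rw [gb_gt (by push_cast; omega), gb_gt (by omega), gb_gt (by omega)]
    simp

lemma gb_star (hp : ‖p‖ < 1) (hp0 : p ≠ 0) (m : ℕ) (j : ℤ) :
    gb p (2*m + 2) (j + 1)
      = (1 + p ^ (2*m + 1)) * gb p (2*m) j + p ^ ((2*m : ℤ) + 1 - j) * gb p (2*m) (j - 1)
        + p ^ (j + 1) * gb p (2*m) (j + 1) := by
  have e1 : gb p (2*m+2) (j+1) = p ^ (j+1) * gb p (2*m+1) (j+1) + gb p (2*m+1) j := by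
    rw [show 2*m+2 = (2*m+1)+1 by omega, gb_pascal₂ hp (2*m+1) (j+1)]
    ring_nf
  have e2 := gb_pascal₁ hp (2*m) (j+1)
  have e3 := gb_pascal₁ hp (2*m) j
  rw [show j+1-1 = j by ring] at e2
  rw [e1, e2, e3]
  have hpow : p ^ (j+1) * p ^ (((2*m:ℕ) : ℤ) + 1 - (j+1)) = p ^ ((2*m+1 : ℕ)) := by
    rw [← zpow_natCast, ← zpow_add₀ hp0]; congr 1; push_cast; ring
  have hc : ((2*m : ℕ) : ℤ) + 1 - j = (2*m : ℤ) + 1 - j := by push_cast; ring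
  rw [hc] at e3 ⊢
  linear_combination gb p (2*m) j * hpow

lemma hp_of (hq : ‖q‖ < 1) : ‖q^2‖ < 1 := by
  rw [norm_pow]; exact pow_lt_one₀ (norm_nonneg q) hq two_ne_zero

lemma hp0_of (hq0 : q ≠ 0) : q^2 ≠ 0 := pow_ne_zero 2 hq0

lemma dd_eq_zero {m : ℕ} {n : ℤ} (h : n ∉ Finset.Icc (-(m:ℤ)) m) : dd q m n = 0 := by
  simp only [Finset.mem_Icc, not_and_or, not_le] at h
  rcases h with h | h
  · rw [dd, gb_neg (by omega), zero_mul]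
  · rw [dd, gb_gt (by push_cast; omega), zero_mul]

lemma summable_dd (m : ℕ) : Summable (dd q m) :=
  summable_of_ne_finset_zero fun n hn => dd_eq_zero hn

lemma zp2 (hq0 : q ≠ 0) (z w : ℤ) : (q^2) ^ z * q ^ w = q ^ (2*z + w) := by
  rw [← zpow_natCast q 2, ← zpow_mul, ← zpow_add₀ hq0]
  norm_num

lemma dd_rec (hq : ‖q‖ < 1) (hq0 : q ≠ 0) (m : ℕ) (n : ℤ) :
    dd q (m+1) n = (1 + q^(4*m+2)) * dd q m n + q^(2*m+1) * (dd q m (n-1) + dd q m (n+1)) := by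
  have hp := hp_of hq
  have hp0 := hp0_of hq0
  have harg : ((m+1 : ℕ) : ℤ) + n = ((m:ℤ) + n) + 1 := by push_cast; ring
  have e0 : dd q (m+1) n = gb (q^2) (2*m+2) (((m:ℤ) + n) + 1) * q ^ (n^2) := by
    rw [dd, show 2*(m+1) = 2*m+2 by omega, harg]
  rw [e0, gb_star hp hp0 m ((m:ℤ)+n)]
  have t1 : ((q^2) ^ (2*m+1) : ℂ) = q ^ (4*m+2) := by rw [← pow_mul]; congr 1; omega
  have t2 : ((q^2) : ℂ) ^ ((2*m:ℤ)+1 - ((m:ℤ)+n)) * q ^ (n^2)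
      = q ^ (2*m+1) * q ^ ((n-1)^2) := by
    rw [zp2 hq0, ← zpow_natCast q (2*m+1), ← zpow_add₀ hq0]
    congr 1; push_cast; ring
  have t3 : ((q^2) : ℂ) ^ (((m:ℤ)+n) + 1) * q ^ (n^2)
      = q ^ (2*m+1) * q ^ ((n+1)^2) := by
    rw [zp2 hq0, ← zpow_natCast q (2*m+1), ← zpow_add₀ hq0]
    congr 1; push_cast; ring
  rw [dd, dd, dd, show (m:ℤ) + (n-1) = ((m:ℤ)+n) - 1 by ring,
    show (m:ℤ) + (n+1) = ((m:ℤ)+n) + 1 by ring]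
  linear_combination gb (q^2) (2*m) ((m:ℤ)+n) * q ^ (n^2) * t1
    + gb (q^2) (2*m) (((m:ℤ)+n) - 1) * t2 + gb (q^2) (2*m) (((m:ℤ)+n) + 1) * t3

lemma T_zero (hq : ‖q‖ < 1) : T q 0 = 1 := by
  rw [T, tsum_eq_single 0]
  · rw [dd]
    norm_num [gb_zero (hp_of hq) 0]
  · intro n hn
    apply dd_eq_zero
    simpa using hn

lemma T_succ (hq : ‖q‖ < 1) (hq0 : q ≠ 0) (m : ℕ) :
    T q (m+1) = (1 + q^(2*m+1))^2 * T q m := by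
  have hs := summable_dd (q := q) m
  have hs1 : Summable (fun n : ℤ => dd q m (n - 1)) :=
    ((Equiv.subRight (1:ℤ)).summable_iff (f := dd q m)).mpr hs
  have hs2 : Summable (fun n : ℤ => dd q m (n + 1)) :=
    ((Equiv.addRight (1:ℤ)).summable_iff (f := dd q m)).mpr hs
  have e1 : ∑' n : ℤ, dd q m (n - 1) = T q m := (Equiv.subRight (1:ℤ)).tsum_eq (dd q m)
  have e2 : ∑' n : ℤ, dd q m (n + 1) = T q m := (Equiv.addRight (1:ℤ)).tsum_eq (dd q m)
  have : T q (m+1)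
      = (1 + q^(4*m+2)) * T q m + q^(2*m+1) * (T q m + T q m) := by
    rw [T, tsum_congr (dd_rec hq hq0 m)]
    rw [Summable.tsum_add ((hs.mul_left _)) (((hs1.add hs2).mul_left _)), tsum_mul_left, tsum_mul_left,
      Summable.tsum_add hs1 hs2, e1, e2, T]
  rw [this]
  have t : q^(4*m+2) = q^(2*m+1) * q^(2*m+1) := by rw [← pow_add]; congr 1; omega
  linear_combination (T q m) * t

lemma T_eq (hq : ‖q‖ < 1) (hq0 : q ≠ 0) (m : ℕ) :
    T q m = ∏ j ∈ Finset.range m, (1 + q^(2*j+1))^2 := by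
  induction m with
  | zero => simpa using T_zero hq
  | succ m ih => rw [T_succ hq hq0 m, ih, Finset.prod_range_succ]; ring

lemma norm_g_lt (hx : ‖x‖ < 1) (hg : ∀ n, ‖g n‖ ≤ ‖x‖ ^ (n+1)) (n : ℕ) : ‖g n‖ < 1 :=
  lt_of_le_of_lt (hg n) (pow_lt_one₀ (norm_nonneg x) hx (by omega))

lemma norm_g_le (hx : ‖x‖ < 1) (hg : ∀ n, ‖g n‖ ≤ ‖x‖ ^ (n+1)) (n : ℕ) : ‖g n‖ ≤ ‖x‖ :=
  le_trans (hg n) (pow_le_of_le_one (norm_nonneg x) hx.le (by omega))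

lemma one_add_g_ne (hx : ‖x‖ < 1) (hg : ∀ n, ‖g n‖ ≤ ‖x‖ ^ (n+1)) (n : ℕ) :
    (1 : ℂ) + g n ≠ 0 := by
  intro h
  have h2 := norm_g_lt hx hg n
  rw [show g n = -1 by linear_combination h] at h2
  simp at h2

lemma summable_log_one_add (hx : ‖x‖ < 1) (hg : ∀ n, ‖g n‖ ≤ ‖x‖ ^ (n+1)) :
    Summable (fun n => Complex.log (1 + g n)) := by
  have hx0 : (0:ℝ) < 1 - ‖x‖ := by linarith
  apply Summable.of_norm
  have hsum : Summable (fun n : ℕ => (‖x‖ * (1 - ‖x‖)⁻¹ / 2 + 1) * ‖x‖ ^ (n+1)) :=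
    ((summable_geometric_of_lt_one (norm_nonneg x) hx).mul_left ‖x‖ |>.congr
      (fun n => by rw [pow_succ]; ring)).mul_left _
  apply hsum.of_nonneg_of_le (fun n => norm_nonneg _)
  intro n
  have hgn := norm_g_lt hx hg n
  have hgn2 := norm_g_le hx hg n
  calc ‖Complex.log (1 + g n)‖
      ≤ ‖g n‖ ^ 2 * (1 - ‖g n‖)⁻¹ / 2 + ‖g n‖ :=
        Complex.norm_log_one_add_le hgn
    _ ≤ (‖x‖ ^ (n+1) * ‖x‖) * (1 - ‖x‖)⁻¹ / 2 + ‖x‖ ^ (n+1) := by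
        have hinv : (1 - ‖g n‖)⁻¹ ≤ (1 - ‖x‖)⁻¹ := by
          apply inv_anti₀ hx0
          linarith
        have hsq : ‖g n‖ ^ 2 ≤ ‖x‖ ^ (n+1) * ‖x‖ := by
          rw [sq]
          exact mul_le_mul (hg n) hgn2 (norm_nonneg _) (pow_nonneg (norm_nonneg x) _)
        have h3 : ‖g n‖ ^ 2 * (1 - ‖g n‖)⁻¹ ≤ (‖x‖ ^ (n+1) * ‖x‖) * (1 - ‖x‖)⁻¹ :=
          mul_le_mul hsq hinv (le_of_lt (inv_pos.mpr (by linarith))) (by positivity)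
        have := hg n
        linarith
    _ = (‖x‖ * (1 - ‖x‖)⁻¹ / 2 + 1) * ‖x‖ ^ (n+1) := by ring

lemma multipliable_one_add (hx : ‖x‖ < 1) (hg : ∀ n, ‖g n‖ ≤ ‖x‖ ^ (n+1)) :
    Multipliable (fun n => (1 : ℂ) + g n) :=
  Complex.multipliable_of_summable_log (summable_log_one_add hx hg)

lemma tprod_one_add_ne (hx : ‖x‖ < 1) (hg : ∀ n, ‖g n‖ ≤ ‖x‖ ^ (n+1)) :
    (∏' n : ℕ, ((1 : ℂ) + g n)) ≠ 0 := by
  have := Complex.cexp_tsum_eq_tprod (fun n => one_add_g_ne hx hg n) (summable_log_one_add hx hg)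
  rw [← this]
  exact Complex.exp_ne_zero _

lemma tendsto_prod_one_add (hx : ‖x‖ < 1) (hg : ∀ n, ‖g n‖ ≤ ‖x‖ ^ (n+1)) :
    Tendsto (fun m => ∏ i ∈ Finset.range m, ((1:ℂ) + g i)) atTop
      (𝓝 (∏' n : ℕ, ((1:ℂ) + g n))) :=
  (multipliable_one_add hx hg).hasProd.tendsto_prod_nat

lemma hgP (hx : ‖x‖ < 1) : ∀ n : ℕ, ‖-(x ^ (n+1))‖ ≤ ‖x‖ ^ (n+1) := by
  intro n; rw [norm_neg, norm_pow]
lemma hgE (hx : ‖x‖ < 1) : ∀ n : ℕ, ‖x ^ (n+1)‖ ≤ ‖x‖ ^ (n+1) := by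
  intro n; rw [norm_pow]
lemma hgO (hx : ‖x‖ < 1) : ∀ n : ℕ, ‖x ^ (2*n+1)‖ ≤ ‖x‖ ^ (n+1) := by
  intro n; rw [norm_pow]
  exact pow_le_pow_of_le_one (norm_nonneg x) hx.le (by omega)

lemma Pinf_eq : Pinf x = ∏' n : ℕ, (1 + -(x ^ (n+1))) :=
  tprod_congr fun n => by ring
lemma qf_eq (m : ℕ) : qf x m = ∏ i ∈ Finset.range m, (1 + -(x ^ (i+1))) :=
  Finset.prod_congr rfl fun i _ => by ring

lemma Pinf_ne (hx : ‖x‖ < 1) : Pinf x ≠ 0 := Pinf_eq ▸ tprod_one_add_ne hx (hgP hx)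
lemma Einf_ne (hx : ‖x‖ < 1) : Einf x ≠ 0 := tprod_one_add_ne hx (hgE hx)
lemma Oinf_ne (hx : ‖x‖ < 1) : Oinf x ≠ 0 := tprod_one_add_ne hx (hgO hx)
lemma multipliable_P (hx : ‖x‖ < 1) : Multipliable (fun n : ℕ => 1 - x ^ (n+1)) := by
  have := multipliable_one_add hx (hgP hx)
  apply this.congr; intro n; ring
lemma multipliable_E (hx : ‖x‖ < 1) : Multipliable (fun n : ℕ => 1 + x ^ (n+1)) :=
  multipliable_one_add hx (hgE hx)
lemma multipliable_O (hx : ‖x‖ < 1) : Multipliable (fun n : ℕ => 1 + x ^ (2*n+1)) :=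
  multipliable_one_add hx (hgO hx)

lemma tendsto_qf (hx : ‖x‖ < 1) : Tendsto (qf x) atTop (𝓝 (Pinf x)) := by
  rw [Pinf_eq]
  exact (tendsto_prod_one_add hx (hgP hx)).congr (fun m => (qf_eq m).symm)

lemma tendsto_O (hx : ‖x‖ < 1) :
    Tendsto (fun m => ∏ j ∈ Finset.range m, (1 + x ^ (2*j+1))) atTop (𝓝 (Oinf x)) :=
  tendsto_prod_one_add hx (hgO hx)

lemma r_pow_le_one {r : ℝ} (h0 : 0 ≤ r) (h1 : r < 1) (i : ℕ) : r ^ (i+1) ≤ 1 :=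
  pow_le_one₀ h0 h1.le

lemma u_nonneg {r : ℝ} (h0 : 0 ≤ r) (h1 : r < 1) (m : ℕ) : 0 ≤ u r m :=
  Finset.prod_nonneg fun i _ => by have := r_pow_le_one h0 h1 i; linarith
lemma v_nonneg {r : ℝ} (h0 : 0 ≤ r) (m : ℕ) : 0 ≤ v r m :=
  Finset.prod_nonneg fun i _ => by positivity

lemma u_antitone {r : ℝ} (h0 : 0 ≤ r) (h1 : r < 1) : Antitone (u r) := by
  apply antitone_nat_of_succ_le
  intro m
  simp only [u, Finset.prod_range_succ]
  have h2 := r_pow_le_one h0 h1 m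
  have h3 : (0:ℝ) ≤ r ^ (m+1) := by positivity
  nlinarith [u_nonneg h0 h1 m, Finset.prod_nonneg (fun i (_ : i ∈ Finset.range m) => by have := r_pow_le_one h0 h1 i; linarith : ∀ i ∈ Finset.range m, (0:ℝ) ≤ 1 - r ^ (i+1))]

lemma v_monotone {r : ℝ} (h0 : 0 ≤ r) : Monotone (v r) := by
  apply monotone_nat_of_le_succ
  intro m
  simp only [v, Finset.prod_range_succ]
  have h3 : (0:ℝ) ≤ r ^ (m+1) := by positivity
  nlinarith [v_nonneg (r := r) h0 m, Finset.prod_nonneg (fun i (_ : i ∈ Finset.range m) => by positivity : ∀ i ∈ Finset.range m, (0:ℝ) ≤ 1 + r ^ (i+1))]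

lemma norm_cast_lt {r : ℝ} (h0 : 0 ≤ r) (h1 : r < 1) : ‖(r : ℂ)‖ < 1 := by
  rwa [Complex.norm_real, Real.norm_eq_abs, _root_.abs_of_nonneg h0]

lemma u_eq (r : ℝ) (h0 : 0 ≤ r) (h1 : r < 1) (m : ℕ) : u r m = ‖qf (r : ℂ) m‖ := by
  rw [qf, norm_prod, u]
  apply Finset.prod_congr rfl
  intro i _
  rw [show (1 : ℂ) - (r:ℂ) ^ (i+1) = ((1 - r ^ (i+1) : ℝ) : ℂ) by push_cast; ring,
    Complex.norm_real, Real.norm_eq_abs,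
    _root_.abs_of_nonneg (by have := r_pow_le_one h0 h1 i; linarith)]

lemma v_eq (r : ℝ) (h0 : 0 ≤ r) (m : ℕ) :
    v r m = ‖∏ i ∈ Finset.range m, ((1:ℂ) + (r:ℂ) ^ (i+1))‖ := by
  rw [norm_prod, v]
  apply Finset.prod_congr rfl
  intro i _
  rw [show (1 : ℂ) + (r:ℂ) ^ (i+1) = ((1 + r ^ (i+1) : ℝ) : ℂ) by push_cast; ring,
    Complex.norm_real, Real.norm_eq_abs, _root_.abs_of_nonneg (by positivity)]

lemma tendsto_u (hp : ‖p‖ < 1) : Tendsto (u ‖p‖) atTop (𝓝 (UU p)) := by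
  have h := (tendsto_qf (norm_cast_lt (norm_nonneg p) hp)).norm
  exact h.congr fun m => (u_eq ‖p‖ (norm_nonneg p) hp m).symm

lemma tendsto_v (hp : ‖p‖ < 1) : Tendsto (v ‖p‖) atTop (𝓝 (VV p)) := by
  have hx := norm_cast_lt (norm_nonneg p) hp
  have h := (tendsto_prod_one_add hx (hgE hx)).norm
  exact h.congr fun m => (v_eq ‖p‖ (norm_nonneg p) m).symm

lemma UU_pos (hp : ‖p‖ < 1) : 0 < UU p :=
  norm_pos_iff.mpr (Pinf_ne (norm_cast_lt (norm_nonneg p) hp))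

lemma UU_le_u (hp : ‖p‖ < 1) (m : ℕ) : UU p ≤ u ‖p‖ m :=
  le_of_tendsto (tendsto_u hp)
    (eventually_atTop.mpr ⟨m, fun k hk => u_antitone (norm_nonneg p) hp hk⟩)

lemma v_le_VV (hp : ‖p‖ < 1) (m : ℕ) : v ‖p‖ m ≤ VV p :=
  ge_of_tendsto (tendsto_v hp)
    (eventually_atTop.mpr ⟨m, fun k hk => v_monotone (norm_nonneg p) hk⟩)

lemma u_le_norm_qf (hp : ‖p‖ < 1) (m : ℕ) : u ‖p‖ m ≤ ‖qf p m‖ := by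
  rw [qf, norm_prod, u]
  apply Finset.prod_le_prod
  · intro i _
    have := r_pow_le_one (norm_nonneg p) hp i
    linarith
  · intro i _
    calc 1 - ‖p‖ ^ (i+1) = ‖(1:ℂ)‖ - ‖p ^ (i+1)‖ := by rw [norm_one, norm_pow]
    _ ≤ ‖1 - p ^ (i+1)‖ := norm_sub_norm_le _ _

lemma norm_qf_le_v (m : ℕ) : ‖qf p m‖ ≤ v ‖p‖ m := by
  rw [qf, norm_prod, v]
  apply Finset.prod_le_prod
  · intro i _; positivity
  · intro i _
    calc ‖1 - p ^ (i+1)‖ ≤ ‖(1:ℂ)‖ + ‖p ^ (i+1)‖ := norm_sub_le _ _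
    _ = 1 + ‖p‖ ^ (i+1) := by rw [norm_one, norm_pow]

lemma UU_le_norm_qf (hp : ‖p‖ < 1) (m : ℕ) : UU p ≤ ‖qf p m‖ :=
  le_trans (UU_le_u hp m) (u_le_norm_qf hp m)

lemma norm_qf_le_VV (hp : ‖p‖ < 1) (m : ℕ) : ‖qf p m‖ ≤ VV p :=
  le_trans (norm_qf_le_v m) (v_le_VV hp m)

lemma VV_pos (hp : ‖p‖ < 1) : 0 < VV p :=
  lt_of_lt_of_le (by
    have h0 := UU_pos hp
    have h1 := UU_le_norm_qf hp 0
    have h2 := norm_qf_le_VV hp 0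
    linarith : (0:ℝ) < VV p) le_rfl

lemma norm_gb_le (hp : ‖p‖ < 1) (m : ℕ) (k : ℤ) : ‖gb p m k‖ ≤ VV p / (UU p)^2 := by
  rw [gb]
  split_ifs with h
  · rw [norm_div, norm_mul]
    have hU := UU_pos hp
    apply div_le_div₀ (VV_pos hp).le (norm_qf_le_VV hp m) (pow_pos hU 2)
    calc UU p ^ 2 = UU p * UU p := by ring
    _ ≤ ‖qf p k.toNat‖ * ‖qf p (m - k.toNat)‖ :=
        mul_le_mul (UU_le_norm_qf hp _) (UU_le_norm_qf hp _) hU.le (norm_nonneg _)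
  · rw [norm_zero]
    exact div_nonneg (VV_pos hp).le (pow_pos (UU_pos hp) 2).le

lemma natAbs_sq_cast (n : ℤ) : ((n.natAbs ^ 2 : ℕ) : ℤ) = n ^ 2 := by
  push_cast [Int.natAbs_sq]
  rw [_root_.sq_abs]

lemma norm_q_zpow_sq (hq0 : q ≠ 0) (n : ℤ) : ‖q ^ (n^2)‖ = ‖q‖ ^ (n.natAbs ^ 2) := by
  rw [norm_zpow, ← natAbs_sq_cast n, zpow_natCast]

lemma summable_bound (hq : ‖q‖ < 1) (C : ℝ) :
    Summable (fun n : ℤ => C * ‖q‖ ^ (n.natAbs ^ 2)) := by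
  have geo : Summable (fun k : ℕ => ‖q‖ ^ k) :=
    summable_geometric_of_lt_one (norm_nonneg q) hq
  have base : Summable (fun k : ℕ => ‖q‖ ^ (k ^ 2)) :=
    geo.of_nonneg_of_le (fun k => by positivity)
      (fun k => pow_le_pow_of_le_one (norm_nonneg q) hq.le (Nat.le_self_pow (by norm_num) k))
  have hint : Summable (fun n : ℤ => ‖q‖ ^ (n.natAbs ^ 2)) := by
    apply Summable.of_nat_of_neg
    · simpa using base
    · simpa using base
  exact hint.mul_left C

lemma dd_tendsto (hq : ‖q‖ < 1) (hq0 : q ≠ 0) (n : ℤ) :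
    Tendsto (fun m => dd q m n) atTop (𝓝 (q ^ (n^2) / Pinf (q^2))) := by
  have hp := hp_of hq
  set A := Pinf (q^2) with hA
  have hAne := Pinf_ne hp
  have h2m : Tendsto (fun m : ℕ => qf (q^2) (2*m)) atTop (𝓝 A) :=
    (tendsto_qf hp).comp (tendsto_atTop_atTop.mpr fun b => ⟨b, fun a ha => by omega⟩)
  have haa : Tendsto (fun m : ℕ => qf (q^2) ((m:ℤ) + n).toNat) atTop (𝓝 A) :=
    (tendsto_qf hp).comp (tendsto_atTop_atTop.mpr fun b =>
      ⟨b + n.natAbs, fun a ha => by omega⟩)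
  have hbb : Tendsto (fun m : ℕ => qf (q^2) (2*m - ((m:ℤ) + n).toNat)) atTop (𝓝 A) :=
    (tendsto_qf hp).comp (tendsto_atTop_atTop.mpr fun b =>
      ⟨b + n.natAbs, fun a ha => by omega⟩)
  have main : Tendsto (fun m : ℕ =>
      qf (q^2) (2*m) / (qf (q^2) ((m:ℤ)+n).toNat * qf (q^2) (2*m - ((m:ℤ)+n).toNat))
        * q ^ (n^2)) atTop (𝓝 (A / (A * A) * q ^ (n^2))) :=
    (h2m.div (haa.mul hbb) (mul_ne_zero hAne hAne)).mul_const _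
  have heq : A / (A * A) * q ^ (n^2) = q ^ (n^2) / A := by
    field_simp
  rw [heq] at main
  apply main.congr'
  filter_upwards [eventually_ge_atTop n.natAbs] with m hm
  rw [dd, gb, if_pos (by constructor <;> [omega; (push_cast; omega)])]

lemma dd_bound (hq : ‖q‖ < 1) (hq0 : q ≠ 0) (m : ℕ) (n : ℤ) :
    ‖dd q m n‖ ≤ (VV (q^2) / (UU (q^2))^2) * ‖q‖ ^ (n.natAbs ^ 2) := by
  rw [dd, norm_mul, norm_q_zpow_sq hq0]
  exact mul_le_mul_of_nonneg_right (norm_gb_le (hp_of hq) _ _) (by positivity)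

lemma key_identity (hq : ‖q‖ < 1) (hq0 : q ≠ 0) :
    (∑' n : ℤ, q ^ (n^2)) = Pinf (q^2) * (Oinf q)^2 := by
  have hp := hp_of hq
  have hAne := Pinf_ne hp
  have h1 : Tendsto (T q) atTop (𝓝 (∑' n : ℤ, q ^ (n^2) / Pinf (q^2))) := by
    apply tendsto_tsum_of_dominated_convergence (summable_bound hq (VV (q^2) / (UU (q^2))^2))
      (dd_tendsto hq hq0)
    exact Eventually.of_forall fun m => fun n => dd_bound hq hq0 m n
  have h2 : Tendsto (T q) atTop (𝓝 ((Oinf q)^2)) := by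
    have := (tendsto_O hq).pow 2
    apply this.congr
    intro m
    rw [← Finset.prod_pow]
    exact (T_eq hq hq0 m).symm
  have h3 := tendsto_nhds_unique h1 h2
  rw [tsum_div_const] at h3
  field_simp at h3
  rw [h3]

lemma sq_norm_lt {x : ℂ} (hx : ‖x‖ < 1) (k : ℕ) (hk : k ≠ 0) : ‖x ^ k‖ < 1 := by
  rw [norm_pow]; exact pow_lt_one₀ (norm_nonneg x) hx hk

lemma Pinf_sq {x : ℂ} (hx : ‖x‖ < 1) : Pinf (x^2) = Pinf x * Einf x := by
  rw [Pinf, Pinf, Einf, ← Multipliable.tprod_mul (multipliable_P hx) (multipliable_E hx)]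
  exact tprod_congr fun n => by ring

lemma Einf_split {x : ℂ} (hx : ‖x‖ < 1) : Einf x = Oinf x * Einf (x^2) := by
  have hodd : Multipliable (fun k : ℕ => (1 : ℂ) + x ^ (2*k+2)) := by
    apply (multipliable_E (sq_norm_lt hx 2 two_ne_zero)).congr
    intro k
    rw [show (x^2)^(k+1) = x^(2*k+2) by rw [← pow_mul]; congr 1]
  have h := tprod_even_mul_odd (f := fun k : ℕ => (1:ℂ) + x ^ (k+1))
    (by apply (multipliable_O hx).congr; intro k; rfl)
    (by apply hodd.congr; intro k; rw [show 2*k+1+1 = 2*k+2 from rfl])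
  rw [Einf, ← h, Oinf, Einf]
  congr 1
  exact tprod_congr fun k => by rw [show (x^2)^(k+1) = x^(2*k+1+1) by rw [← pow_mul]; congr 1]

lemma Oinf_formula {q : ℂ} (hq : ‖q‖ < 1) :
    Oinf q * (Pinf q * Pinf (q^4)) = Pinf (q^2)^2 := by
  have h2 : ‖q^2‖ < 1 := sq_norm_lt hq 2 two_ne_zero
  have e1 := Pinf_sq hq
  have e2 := Pinf_sq h2
  rw [show ((q:ℂ)^2)^2 = q^4 by ring] at e2
  have e3 := Einf_split hq
  linear_combination (-Pinf (q^2)) * e1 + (Oinf q * Pinf q) * e2 + (-(Pinf q * Pinf (q^2))) * e3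

lemma theta_eq_eta {q : ℂ} (hq : ‖q‖ < 1) (hq0 : q ≠ 0) :
    (∑' n : ℤ, q ^ ((n:ℤ)^2)) = Pinf (q^2)^5 / (Pinf q ^2 * Pinf (q^4)^2) := by
  have h2 : ‖q^2‖ < 1 := sq_norm_lt hq 2 two_ne_zero
  have h4 : ‖q^4‖ < 1 := sq_norm_lt hq 4 (by norm_num)
  have n1 := Pinf_ne hq
  have n2 := Pinf_ne h2
  have n4 := Pinf_ne h4
  rw [key_identity hq hq0]
  have hO := Oinf_formula hq
  field_simp
  linear_combination (Oinf q * (Pinf q * Pinf (q^4)) + Pinf (q^2)^2) * hO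

end Stmt8
end
end Stmt8Aux

open Stmt8 in
/-- `Θ(τ) = η(2τ)⁵ / (η(τ)² η(4τ)²)` on the upper half-plane. -/
theorem stmt8 (τ : ℂ) (hτ : 0 < τ.im) :
    jacobiThetaQ τ = dedekindEta (2 * τ) ^ 5 / (dedekindEta τ ^ 2 * dedekindEta (4 * τ) ^ 2) := by
  set q : ℂ := Complex.exp (2 * π * I * τ) with hqdef
  have hq : ‖q‖ < 1 := by
    rw [hqdef, Complex.norm_exp]
    rw [Real.exp_lt_one_iff]
    rw [show (2 * (π:ℂ) * I * τ) = (((2*π : ℝ)):ℂ) * τ * I by push_cast; ring]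
    rw [Complex.mul_I_re]
    simp only [Complex.mul_im, Complex.ofReal_re, Complex.ofReal_im]
    have := Real.pi_pos
    nlinarith
  have hq0 : q ≠ 0 := Complex.exp_ne_zero _
  -- the theta side
  have hθ : jacobiThetaQ τ = ∑' n : ℤ, q ^ ((n:ℤ)^2) := by
    apply tsum_congr
    intro n
    rw [hqdef, ← Complex.exp_int_mul]
    congr 1
    push_cast
    ring
  -- eta values
  have exp2 : Complex.exp (2 * π * I * (2 * τ)) = q ^ 2 := by
    rw [hqdef, ← Complex.exp_nat_mul]
    congr 1
    ring
  have exp4 : Complex.exp (2 * π * I * (4 * τ)) = q ^ 4 := by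
    rw [hqdef, ← Complex.exp_nat_mul]
    congr 1
    ring
  have eta1 : dedekindEta τ = Complex.exp (π * I * τ / 12) * Pinf q := by
    rw [dedekindEta, Pinf, hqdef]
  have eta2 : dedekindEta (2 * τ) = Complex.exp (π * I * (2 * τ) / 12) * Pinf (q ^ 2) := by
    rw [dedekindEta, Pinf]
    simp only [exp2]
  have eta4 : dedekindEta (4 * τ) = Complex.exp (π * I * (4 * τ) / 12) * Pinf (q ^ 4) := by
    rw [dedekindEta, Pinf]
    simp only [exp4]
  rw [hθ, theta_eq_eta hq hq0, eta1, eta2, eta4]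
  have h2 : ‖q^2‖ < 1 := sq_norm_lt hq 2 two_ne_zero
  have h4 : ‖q^4‖ < 1 := sq_norm_lt hq 4 (by norm_num)
  have n1 := Pinf_ne hq
  have n2 := Pinf_ne h2
  have n4 := Pinf_ne h4
  have he : ∀ z : ℂ, Complex.exp z ≠ 0 := Complex.exp_ne_zero
  have hexp : Complex.exp (π * I * (2*τ) / 12) ^ 5
      = Complex.exp (π * I * τ / 12) ^ 2 * Complex.exp (π * I * (4*τ) / 12) ^ 2 := by
    rw [← Complex.exp_nat_mul, ← Complex.exp_nat_mul, ← Complex.exp_nat_mul, ← Complex.exp_add]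
    congr 1
    push_cast
    ring
  rw [mul_pow, mul_pow, mul_pow, hexp]
  have hE1 : Complex.exp (π * I * τ / 12) ≠ 0 := he _
  have hE4 : Complex.exp (π * I * (4*τ) / 12) ≠ 0 := he _
  field_simp
end

section
/- The eta quotient η(16τ)²/η(8τ) equals the theta series over odd squares: η(16τ)²/η(8τ) = Σ_{n≥0} q^{(2n+1)²}, equivalently q (q¹⁶;q¹⁶)_∞² / (q⁸;q⁸)_∞ = Σ_{n≥0} q^{(2n+1)²} as power series in q. -/
set_option maxHeartbeats 1000000

open Complex

open scoped Real

open Filter Finset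

open Complex Filter Finset

noncomputable def PPand (u : ℂ) (m : ℕ) : ℂ := ∏ j ∈ Finset.range m, (1 - u ^ (j + 1))

lemma PPand_succ (u : ℂ) (m : ℕ) : PPand u (m + 1) = PPand u m * (1 - u ^ (m + 1)) :=
  Finset.prod_range_succ _ _

lemma one_sub_pow_ne (u : ℂ) (hu : ‖u‖ < 1) (j : ℕ) : 1 - u ^ (j + 1) ≠ 0 := by
  intro h
  have h2 : u ^ (j + 1) = 1 := by linear_combination -h
  have : ‖u ^ (j + 1)‖ < 1 := by
    rw [norm_pow]; exact pow_lt_one₀ (norm_nonneg u) hu (Nat.succ_ne_zero j)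
  rw [h2, norm_one] at this
  exact lt_irrefl _ this

lemma PPand_ne (u : ℂ) (hu : ‖u‖ < 1) (m : ℕ) : PPand u m ≠ 0 := by
  induction m with
  | zero => simp [PPand]
  | succ n ih => rw [PPand_succ]; exact mul_ne_zero ih (one_sub_pow_ne u hu n)

noncomputable def GBin (u : ℂ) (N : ℕ) (k : ℤ) : ℂ :=
  if 0 ≤ k ∧ k ≤ N then PPand u N / (PPand u k.toNat * PPand u (N - k.toNat)) else 0

lemma GBin_out (u : ℂ) (N : ℕ) (k : ℤ) (h : k < 0 ∨ (N : ℤ) < k) : GBin u N k = 0 := by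
  rw [GBin, if_neg]; rintro ⟨h1, h2⟩
  rcases h with h | h
  · exact absurd h1 (not_le.mpr h)
  · exact absurd h2 (not_le.mpr h)

lemma GBin_natCast (u : ℂ) (N m : ℕ) (h : m ≤ N) :
    GBin u N (m : ℤ) = PPand u N / (PPand u m * PPand u (N - m)) := by
  rw [GBin, if_pos ⟨by positivity, by exact_mod_cast h⟩, Int.toNat_natCast]

lemma GBin_zero (u : ℂ) (hu : ‖u‖ < 1) (N : ℕ) : GBin u N 0 = 1 := by
  have := GBin_natCast u N 0 (Nat.zero_le N)
  simp only [Nat.cast_zero] at this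
  rw [this, show PPand u 0 = 1 from rfl, Nat.sub_zero, one_mul]
  exact div_self (PPand_ne u hu N)

/-- First Pascal recurrence for Gaussian binomials. -/
lemma pascalA (u : ℂ) (hu : ‖u‖ < 1) (hu0 : u ≠ 0) (N : ℕ) (k : ℤ) :
    GBin u (N + 1) (k + 1) = GBin u N k + u ^ (k + 1) * GBin u N (k + 1) := by
  rcases lt_trichotomy k (-1) with hk | hk | hk
  · rw [GBin_out u _ _ (Or.inl (by omega)), GBin_out u _ _ (Or.inl (by omega)),
      GBin_out u _ _ (Or.inl (by omega))]
    ring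
  · subst hk
    rw [show (-1 : ℤ) + 1 = 0 by ring, GBin_zero u hu, GBin_zero u hu,
      GBin_out u N (-1) (Or.inl (by omega)), zpow_zero]
    ring
  · -- k ≥ 0
    obtain ⟨m, rfl⟩ : ∃ m : ℕ, k = (m : ℤ) := ⟨k.toNat, by omega⟩
    rcases lt_trichotomy m N with hm | hm | hm
    · -- generic case : m + 1 ≤ N
      obtain ⟨a, rfl⟩ : ∃ a : ℕ, N = m + 1 + a := ⟨N - m - 1, by omega⟩
      rw [show ((m : ℤ) + 1) = ((m + 1 : ℕ) : ℤ) by push_cast; ring]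
      rw [GBin_natCast u _ _ (by omega), GBin_natCast u _ _ (by omega),
        GBin_natCast u _ _ (by omega), zpow_natCast]
      rw [show m + 1 + a + 1 - (m + 1) = a + 1 by omega,
        show m + 1 + a - m = a + 1 by omega,
        show m + 1 + a - (m + 1) = a by omega]
      rw [show m + 1 + a + 1 = (m + 1 + a) + 1 by ring, PPand_succ u (m + 1 + a),
        PPand_succ u m, PPand_succ u a]
      have h1 := PPand_ne u hu m
      have h2 := PPand_ne u hu a
      have h3 := PPand_ne u hu (m + 1 + a)
      have e1 := one_sub_pow_ne u hu m
      have e2 := one_sub_pow_ne u hu a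
      field_simp
      ring
    · -- m = N
      subst hm
      rw [show ((m : ℤ) + 1) = ((m + 1 : ℕ) : ℤ) by push_cast; ring]
      rw [GBin_natCast u _ _ (le_refl _), GBin_natCast u _ _ (le_refl _),
        GBin_out u m _ (Or.inr (by push_cast; omega)), zpow_natCast]
      simp only [Nat.sub_self]
      rw [show PPand u 0 = 1 from rfl, mul_one, mul_one,
        div_self (PPand_ne u hu (m + 1)), div_self (PPand_ne u hu m)]
      ring
    · -- m > N : everything vanishes
      rw [GBin_out u _ _ (Or.inr (by push_cast; omega)),
        GBin_out u _ _ (Or.inr (by push_cast; omega)),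
        GBin_out u _ _ (Or.inr (by push_cast; omega))]
      ring

/-- Second Pascal recurrence for Gaussian binomials. -/
lemma pascalB (u : ℂ) (hu : ‖u‖ < 1) (hu0 : u ≠ 0) (N : ℕ) (k : ℤ) :
    GBin u (N + 1) (k + 1) = u ^ ((N : ℤ) - k) * GBin u N k + GBin u N (k + 1) := by
  rcases lt_trichotomy k (-1) with hk | hk | hk
  · rw [GBin_out u _ _ (Or.inl (by omega)), GBin_out u _ _ (Or.inl (by omega)),
      GBin_out u _ _ (Or.inl (by omega))]
    ring
  · subst hk
    rw [show (-1 : ℤ) + 1 = 0 by ring, GBin_zero u hu, GBin_zero u hu,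
      GBin_out u N (-1) (Or.inl (by omega))]
    ring
  · obtain ⟨m, rfl⟩ : ∃ m : ℕ, k = (m : ℤ) := ⟨k.toNat, by omega⟩
    rcases lt_trichotomy m N with hm | hm | hm
    · obtain ⟨a, rfl⟩ : ∃ a : ℕ, N = m + 1 + a := ⟨N - m - 1, by omega⟩
      rw [show ((m : ℤ) + 1) = ((m + 1 : ℕ) : ℤ) by push_cast; ring]
      rw [GBin_natCast u _ _ (by omega), GBin_natCast u _ _ (by omega),
        GBin_natCast u _ _ (by omega)]
      rw [show ((m + 1 + a : ℕ) : ℤ) - (m : ℤ) = ((a + 1 : ℕ) : ℤ) by push_cast; ring,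
        zpow_natCast]
      rw [show m + 1 + a + 1 - (m + 1) = a + 1 by omega,
        show m + 1 + a - m = a + 1 by omega,
        show m + 1 + a - (m + 1) = a by omega]
      rw [show m + 1 + a + 1 = (m + 1 + a) + 1 by ring, PPand_succ u (m + 1 + a),
        PPand_succ u m, PPand_succ u a]
      have h1 := PPand_ne u hu m
      have h2 := PPand_ne u hu a
      have h3 := PPand_ne u hu (m + 1 + a)
      have e1 := one_sub_pow_ne u hu m
      have e2 := one_sub_pow_ne u hu a
      field_simp
      ring
    · subst hm
      rw [show ((m : ℤ) + 1) = ((m + 1 : ℕ) : ℤ) by push_cast; ring]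
      rw [GBin_natCast u _ _ (le_refl _), GBin_natCast u _ _ (le_refl _),
        GBin_out u m _ (Or.inr (by push_cast; omega))]
      simp only [Nat.sub_self, sub_self, zpow_zero]
      rw [show PPand u 0 = 1 from rfl, mul_one, mul_one,
        div_self (PPand_ne u hu (m + 1)), div_self (PPand_ne u hu m)]
      ring
    · rw [GBin_out u _ _ (Or.inr (by push_cast; omega)),
        GBin_out u _ _ (Or.inr (by push_cast; omega)),
        GBin_out u _ _ (Or.inr (by push_cast; omega))]
      ring

/-- Three-term recurrence: key step for the finite Jacobi triple product. -/
lemma threeterm (u : ℂ) (hu : ‖u‖ < 1) (hu0 : u ≠ 0) (n : ℕ) (k : ℤ) :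
    GBin u (2 * n + 2) ((n : ℤ) + 1 + k) =
      (1 + u ^ (2 * (n : ℤ) + 1)) * GBin u (2 * n) ((n : ℤ) + k)
        + u ^ ((n : ℤ) + 1 - k) * GBin u (2 * n) ((n : ℤ) + k - 1)
        + u ^ ((n : ℤ) + 1 + k) * GBin u (2 * n) ((n : ℤ) + k + 1) := by
  have B1 := pascalB u hu hu0 (2 * n) ((n : ℤ) + k - 1)
  rw [show ((n : ℤ) + k - 1) + 1 = (n : ℤ) + k by ring] at B1
  have B2 := pascalB u hu hu0 (2 * n) ((n : ℤ) + k)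
  push_cast at B1 B2
  have A := pascalA u hu hu0 (2 * n + 1) ((n : ℤ) + k)
  rw [show (2 * n + 1) + 1 = 2 * n + 2 by omega] at A
  rw [show ((n : ℤ) + 1 + k) = ((n : ℤ) + k) + 1 by ring, A, B1, B2]
  have e1 : u ^ ((n : ℤ) + k + 1) * u ^ ((2 * (n : ℤ)) - ((n : ℤ) + k)) =
      u ^ (2 * (n : ℤ) + 1) := by
    rw [← zpow_add₀ hu0]; congr 1; ring
  have e2 : (2 * (n : ℤ)) - ((n : ℤ) + k - 1) = (n : ℤ) + 1 - k := by ring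
  rw [e2]
  have e3 : u ^ (1 + (n : ℤ) + k) * u ^ ((n : ℤ) - k) = u ^ (1 + (n : ℤ) * 2) := by
    rw [← zpow_add₀ hu0]; congr 1; ring
  ring_nf
  linear_combination (GBin u (n * 2) ((n : ℤ) + k)) * e3

/-- Finite theta-like sum. -/
noncomputable def SgS (w : ℂ) (n : ℕ) : ℂ :=
  ∑ k ∈ Finset.Icc (-(n : ℤ)) (n : ℤ), GBin (w ^ 2) (2 * n) ((n : ℤ) + k) * w ^ (k * (k + 1))

/-- Sums of the `GBin`-weighted terms over any interval containing `[-n, n]` agree. -/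
lemma Sg_ext (w : ℂ) (n : ℕ) (f : ℤ → ℂ) (a b : ℤ) (ha : a ≤ -(n : ℤ)) (hb : (n : ℤ) ≤ b) :
    ∑ k ∈ Finset.Icc a b, GBin (w ^ 2) (2 * n) ((n : ℤ) + k) * f k =
      ∑ k ∈ Finset.Icc (-(n : ℤ)) (n : ℤ), GBin (w ^ 2) (2 * n) ((n : ℤ) + k) * f k := by
  refine (Finset.sum_subset (Finset.Icc_subset_Icc ha hb) ?_).symm
  intro k hk hk2
  simp only [Finset.mem_Icc] at hk hk2
  rw [GBin_out _ _ _ (by push_cast; omega), zero_mul]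

lemma Sg_zero (w : ℂ) (hw : ‖w‖ < 1) : SgS w 0 = 1 := by
  have hu : ‖w ^ 2‖ < 1 := by
    rw [norm_pow]; exact pow_lt_one₀ (norm_nonneg w) hw two_ne_zero
  rw [SgS]
  norm_num
  rw [GBin_zero _ hu]

lemma Sg_succ (w : ℂ) (hw : ‖w‖ < 1) (hw0 : w ≠ 0) (n : ℕ) :
    SgS w (n + 1) = SgS w n * ((1 + w ^ (2 * n + 2)) * (1 + w ^ (2 * n))) := by
  have hu : ‖w ^ 2‖ < 1 := by
    rw [norm_pow]; exact pow_lt_one₀ (norm_nonneg w) hw two_ne_zero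
  have hu0 : (w ^ 2) ≠ 0 := pow_ne_zero 2 hw0
  have key : ∀ k ∈ Finset.Icc (-((n : ℤ) + 1)) ((n : ℤ) + 1),
      GBin (w ^ 2) (2 * (n + 1)) (((n + 1 : ℕ) : ℤ) + k) * w ^ (k * (k + 1)) =
        GBin (w ^ 2) (2 * n) ((n : ℤ) + k) * w ^ (k * (k + 1)) * (1 + (w ^ 2) ^ (2 * (n : ℤ) + 1))
        + GBin (w ^ 2) (2 * n) ((n : ℤ) + k - 1) * ((w ^ 2) ^ ((n : ℤ) + 1 - k) * w ^ (k * (k + 1)))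
        + GBin (w ^ 2) (2 * n) ((n : ℤ) + k + 1) * ((w ^ 2) ^ ((n : ℤ) + 1 + k) * w ^ (k * (k + 1))) := by
    intro k _
    rw [show ((n + 1 : ℕ) : ℤ) + k = (n : ℤ) + 1 + k by push_cast; ring,
      show 2 * (n + 1) = 2 * n + 2 by ring, threeterm (w ^ 2) hu hu0 n k]
    ring
  have hIcc : Finset.Icc (-((n + 1 : ℕ) : ℤ)) ((n + 1 : ℕ) : ℤ)
      = Finset.Icc (-((n : ℤ) + 1)) ((n : ℤ) + 1) := by push_cast; rfl
  rw [SgS, hIcc, Finset.sum_congr rfl key, Finset.sum_add_distrib, Finset.sum_add_distrib]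
  -- Term 1
  have T1 : ∑ k ∈ Finset.Icc (-((n : ℤ) + 1)) ((n : ℤ) + 1),
      GBin (w ^ 2) (2 * n) ((n : ℤ) + k) * w ^ (k * (k + 1)) * (1 + (w ^ 2) ^ (2 * (n : ℤ) + 1))
      = SgS w n * (1 + (w ^ 2) ^ (2 * (n : ℤ) + 1)) := by
    rw [← Finset.sum_mul]
    congr 1
    exact Sg_ext w n (fun k => w ^ (k * (k + 1))) _ _ (by omega) (by omega)
  -- Term 2 : shift k = j + 1
  have T2 : ∑ k ∈ Finset.Icc (-((n : ℤ) + 1)) ((n : ℤ) + 1),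
      GBin (w ^ 2) (2 * n) ((n : ℤ) + k - 1) * ((w ^ 2) ^ ((n : ℤ) + 1 - k) * w ^ (k * (k + 1)))
      = SgS w n * w ^ (2 * n + 2) := by
    rw [show Finset.Icc (-((n : ℤ) + 1)) ((n : ℤ) + 1)
        = (Finset.Icc (-((n : ℤ) + 2)) ((n : ℤ))).map (addRightEmbedding 1) by
      rw [Finset.map_add_right_Icc]; congr 1 <;> ring, Finset.sum_map]
    simp only [addRightEmbedding_apply]
    have pt : ∀ j ∈ Finset.Icc (-((n : ℤ) + 2)) ((n : ℤ)),
        GBin (w ^ 2) (2 * n) ((n : ℤ) + (j + 1) - 1) *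
          ((w ^ 2) ^ ((n : ℤ) + 1 - (j + 1)) * w ^ ((j + 1) * (j + 1 + 1)))
        = GBin (w ^ 2) (2 * n) ((n : ℤ) + j) * (w ^ (j * (j + 1)) * w ^ (2 * n + 2)) := by
      intro j _
      rw [show (n : ℤ) + (j + 1) - 1 = (n : ℤ) + j by ring]
      congr 1
      rw [← zpow_natCast w 2, ← zpow_mul, ← zpow_add₀ hw0,
        ← zpow_natCast w (2 * n + 2), ← zpow_add₀ hw0]
      congr 1
      push_cast
      ring
    rw [Finset.sum_congr rfl pt]
    have := Sg_ext w n (fun j => w ^ (j * (j + 1)) * w ^ (2 * n + 2)) (-((n : ℤ) + 2)) ((n : ℤ))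
      (by omega) (by omega)
    rw [this, SgS, Finset.sum_mul]
    refine Finset.sum_congr rfl fun j _ => by ring
  -- Term 3 : shift k = j - 1
  have T3 : ∑ k ∈ Finset.Icc (-((n : ℤ) + 1)) ((n : ℤ) + 1),
      GBin (w ^ 2) (2 * n) ((n : ℤ) + k + 1) * ((w ^ 2) ^ ((n : ℤ) + 1 + k) * w ^ (k * (k + 1)))
      = SgS w n * w ^ (2 * n) := by
    rw [show Finset.Icc (-((n : ℤ) + 1)) ((n : ℤ) + 1)
        = (Finset.Icc (-((n : ℤ))) ((n : ℤ) + 2)).map (addRightEmbedding (-1)) by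
      rw [Finset.map_add_right_Icc]; congr 1 <;> ring, Finset.sum_map]
    simp only [addRightEmbedding_apply]
    have pt : ∀ j ∈ Finset.Icc (-((n : ℤ))) ((n : ℤ) + 2),
        GBin (w ^ 2) (2 * n) ((n : ℤ) + (j + -1) + 1) *
          ((w ^ 2) ^ ((n : ℤ) + 1 + (j + -1)) * w ^ ((j + -1) * (j + -1 + 1)))
        = GBin (w ^ 2) (2 * n) ((n : ℤ) + j) * (w ^ (j * (j + 1)) * w ^ (2 * n)) := by
      intro j _
      rw [show (n : ℤ) + (j + -1) + 1 = (n : ℤ) + j by ring]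
      congr 1
      rw [← zpow_natCast w 2, ← zpow_mul, ← zpow_add₀ hw0,
        ← zpow_natCast w (2 * n), ← zpow_add₀ hw0]
      congr 1
      push_cast
      ring
    rw [Finset.sum_congr rfl pt]
    have := Sg_ext w n (fun j => w ^ (j * (j + 1)) * w ^ (2 * n)) (-((n : ℤ))) ((n : ℤ) + 2)
      (by omega) (by omega)
    rw [this, SgS, Finset.sum_mul]
    refine Finset.sum_congr rfl fun j _ => by ring
  rw [T1, T2, T3,
    show (2 * (n : ℤ) + 1) = ((2 * n + 1 : ℕ) : ℤ) by push_cast; ring, zpow_natCast]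
  ring

lemma SgF (w : ℂ) (hw : ‖w‖ < 1) (hw0 : w ≠ 0) (n : ℕ) :
    SgS w n = ∏ j ∈ Finset.range n, ((1 + w ^ (2 * j + 2)) * (1 + w ^ (2 * j))) := by
  induction n with
  | zero => simpa using Sg_zero w hw
  | succ m ih => rw [Finset.prod_range_succ, ← ih, Sg_succ w hw hw0 m]

open Filter in
/-- Logs of `1 + f n` are summable when `f` is. -/
lemma summable_log_one_add (f : ℕ → ℂ) (hf : Summable f) :
    Summable fun n => Complex.log (1 + f n) := by
  have h0 : Tendsto (fun n => ‖f n‖) atTop (nhds 0) := by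
    simpa using hf.tendsto_atTop_zero.norm
  have hev : ∀ᶠ n in atTop, ‖Complex.log (1 + f n)‖ ≤ 3 / 2 * ‖f n‖ := by
    filter_upwards [h0.eventually_le_const (by norm_num : (0:ℝ) < 1/2)] with n hn
    exact Complex.norm_log_one_add_half_le_self hn
  refine Summable.of_norm_bounded_eventually (g := fun n => 3 / 2 * ‖f n‖) (hf.norm.mul_left _) ?_
  rwa [Nat.cofinite_eq_atTop]

lemma mult_one_add (f : ℕ → ℂ) (hf : Summable f) (h1 : ∀ n, 1 + f n ≠ 0) :
    Multipliable (fun n => 1 + f n) :=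
  Complex.multipliable_of_summable_log (summable_log_one_add f hf)

lemma tprod_one_add_ne (f : ℕ → ℂ) (hf : Summable f) (h1 : ∀ n, 1 + f n ≠ 0) :
    (∏' n, (1 + f n)) ≠ 0 := by
  have := Complex.cexp_tsum_eq_tprod (f := fun n => 1 + f n) h1 (summable_log_one_add f hf)
  rw [← this]
  exact Complex.exp_ne_zero _

lemma one_add_pow_ne (w : ℂ) (hw : ‖w‖ < 1) (m : ℕ) : 1 + w ^ m ≠ 0 := by
  cases m with
  | zero => norm_num
  | succ j =>
    intro h
    have h2 : w ^ (j + 1) = -1 := by linear_combination h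
    have : ‖w ^ (j + 1)‖ < 1 := by
      rw [norm_pow]; exact pow_lt_one₀ (norm_nonneg w) hw (Nat.succ_ne_zero j)
    rw [h2] at this
    norm_num at this

lemma summable_pow_aux (w : ℂ) (hw : ‖w‖ < 1) (c d : ℕ) (hc : c ≠ 0) :
    Summable fun n => w ^ (c * n + d) := by
  refine Summable.of_norm ?_
  refine Summable.of_nonneg_of_le (fun n => norm_nonneg _)
    (fun n => ?_) (summable_geometric_of_norm_lt_one (by rwa [norm_norm] : ‖‖w‖‖ < 1))
  rw [norm_pow]
  calc ‖w‖ ^ (c * n + d) ≤ ‖w‖ ^ n := by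
        refine pow_le_pow_of_le_one (norm_nonneg w) hw.le ?_
        have : 1 * n ≤ c * n := Nat.mul_le_mul_right n (Nat.one_le_iff_ne_zero.mpr hc)
        omega
    _ = ‖w‖ ^ n := rfl

lemma mult_PP (u : ℂ) (hu : ‖u‖ < 1) : Multipliable (fun j : ℕ => 1 - u ^ (j + 1)) := by
  have := mult_one_add (fun j => -(u ^ (j + 1)))
    (by simpa using (summable_pow_aux u hu 1 1 one_ne_zero).neg)
    (fun j => by simpa [sub_eq_add_neg] using one_sub_pow_ne u hu j)
  simpa [sub_eq_add_neg] using this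

lemma Pinf_ne (u : ℂ) (hu : ‖u‖ < 1) : (∏' j : ℕ, (1 - u ^ (j + 1))) ≠ 0 := by
  have := tprod_one_add_ne (fun j => -(u ^ (j + 1)))
    (by simpa using (summable_pow_aux u hu 1 1 one_ne_zero).neg)
    (fun j => by simpa [sub_eq_add_neg] using one_sub_pow_ne u hu j)
  simpa [sub_eq_add_neg] using this

open Filter in
lemma PP_tendsto (u : ℂ) (hu : ‖u‖ < 1) :
    Tendsto (fun m => PPand u m) atTop (nhds (∏' j : ℕ, (1 - u ^ (j + 1)))) :=
  (mult_PP u hu).hasProd.tendsto_prod_nat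

/-- `PPand` as an exponential of a sum of logs. -/
lemma PPand_exp (u : ℂ) (hu : ‖u‖ < 1) (m : ℕ) :
    PPand u m = Complex.exp (∑ j ∈ Finset.range m, Complex.log (1 - u ^ (j + 1))) := by
  rw [Complex.exp_sum, PPand]
  exact Finset.prod_congr rfl fun j _ => (Complex.exp_log (one_sub_pow_ne u hu j)).symm

lemma summable_log_PP (u : ℂ) (hu : ‖u‖ < 1) :
    Summable fun j : ℕ => ‖Complex.log (1 - u ^ (j + 1))‖ := by
  have := (summable_log_one_add (fun j => -(u ^ (j + 1)))
    (by simpa using (summable_pow_aux u hu 1 1 one_ne_zero).neg)).norm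
  simpa [sub_eq_add_neg] using this

/-- Uniform two-sided bound on the partial products. -/
lemma PPand_bounds (u : ℂ) (hu : ‖u‖ < 1) (m : ℕ) :
    Real.exp (-(∑' j : ℕ, ‖Complex.log (1 - u ^ (j + 1))‖)) ≤ ‖PPand u m‖ ∧
      ‖PPand u m‖ ≤ Real.exp (∑' j : ℕ, ‖Complex.log (1 - u ^ (j + 1))‖) := by
  set T : ℝ := ∑' j : ℕ, ‖Complex.log (1 - u ^ (j + 1))‖ with hT
  set z : ℂ := ∑ j ∈ Finset.range m, Complex.log (1 - u ^ (j + 1)) with hz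
  have hzT : ‖z‖ ≤ T := by
    refine le_trans (norm_sum_le _ _) ?_
    exact (summable_log_PP u hu).sum_le_tsum _ (fun i _ => norm_nonneg _)
  have hnorm : ‖PPand u m‖ = Real.exp z.re := by
    rw [PPand_exp u hu m, Complex.norm_exp]
  constructor
  · rw [hnorm]
    apply Real.exp_le_exp.mpr
    have : -‖z‖ ≤ z.re := by
      have := Complex.abs_re_le_norm z
      cases abs_le.mp this with
      | intro h1 h2 => linarith
    linarith
  · rw [hnorm]
    apply Real.exp_le_exp.mpr
    have : z.re ≤ ‖z‖ := by
      have := Complex.abs_re_le_norm z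
      cases abs_le.mp this with
      | intro h1 h2 => linarith
    linarith

/-- Uniform bound on Gaussian binomials. -/
lemma GBin_bound (u : ℂ) (hu : ‖u‖ < 1) (N : ℕ) (k : ℤ) :
    ‖GBin u N k‖ ≤ Real.exp (3 * (∑' j : ℕ, ‖Complex.log (1 - u ^ (j + 1))‖)) := by
  set T : ℝ := ∑' j : ℕ, ‖Complex.log (1 - u ^ (j + 1))‖ with hT
  rw [GBin]
  split_ifs with h
  · rw [norm_div, norm_mul]
    have h1 := PPand_bounds u hu N
    have h2 := PPand_bounds u hu k.toNat
    have h3 := PPand_bounds u hu (N - k.toNat)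
    have hpos : (0:ℝ) < Real.exp (-T) * Real.exp (-T) := by positivity
    calc ‖PPand u N‖ / (‖PPand u k.toNat‖ * ‖PPand u (N - k.toNat)‖)
        ≤ Real.exp T / (Real.exp (-T) * Real.exp (-T)) := by
          apply div_le_div₀ (Real.exp_nonneg T) h1.2 hpos
          exact mul_le_mul h2.1 h3.1 (Real.exp_nonneg _) (norm_nonneg _)
      _ = Real.exp (3 * T) := by
          rw [← Real.exp_add, ← Real.exp_sub]; congr 1; ring
  · simpa using Real.exp_nonneg (3 * T)

open Filter in
/-- The central Gaussian binomials tend to `1 / P∞`. -/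
lemma GBin_tendsto (u : ℂ) (hu : ‖u‖ < 1) (k : ℤ) :
    Tendsto (fun n : ℕ => GBin u (2 * n) ((n : ℤ) + k)) atTop
      (nhds ((∏' j : ℕ, (1 - u ^ (j + 1))) /
        ((∏' j : ℕ, (1 - u ^ (j + 1))) * (∏' j : ℕ, (1 - u ^ (j + 1)))))) := by
  set P : ℂ := ∏' j : ℕ, (1 - u ^ (j + 1)) with hP
  have hPne : P ≠ 0 := Pinf_ne u hu
  have hmul2 : Tendsto (fun n : ℕ => 2 * n) atTop atTop :=
    tendsto_atTop_mono (fun n => by omega : ∀ n : ℕ, n ≤ 2 * n) tendsto_id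
  have h2n : Tendsto (fun n : ℕ => PPand u (2 * n)) atTop (nhds P) :=
    (PP_tendsto u hu).comp hmul2
  have ha : Tendsto (fun n : ℕ => PPand u ((n : ℤ) + k).toNat) atTop (nhds P) :=
    (PP_tendsto u hu).comp (tendsto_atTop_mono (fun n => by omega)
      (tendsto_sub_atTop_nat k.natAbs))
  have hb : Tendsto (fun n : ℕ => PPand u (2 * n - ((n : ℤ) + k).toNat)) atTop (nhds P) :=
    (PP_tendsto u hu).comp (tendsto_atTop_mono (fun n => by omega)
      (tendsto_sub_atTop_nat k.natAbs))
  have hdiv : Tendsto (fun n : ℕ => PPand u (2 * n) /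
      (PPand u ((n : ℤ) + k).toNat * PPand u (2 * n - ((n : ℤ) + k).toNat))) atTop
      (nhds (P / (P * P))) :=
    h2n.div (ha.mul hb) (mul_ne_zero hPne hPne)
  refine hdiv.congr' ?_
  filter_upwards [eventually_ge_atTop k.natAbs] with n hn
  rw [GBin, if_pos ⟨by omega, by push_cast; omega⟩]

/-- Exponent reduction for `k(k+1)` powers over `ℤ`. -/
lemma zpow_kk (w : ℂ) (k : ℤ) (m : ℕ) (h : k * (k + 1) = (m : ℤ)) :
    w ^ (k * (k + 1)) = w ^ m := by rw [h, zpow_natCast]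

/-- Reindexing `k (k+1)` powers over `ℤ` via `Int.rec`. -/
lemma int_rec_eq (w : ℂ) :
    (fun k : ℤ => w ^ (k * (k + 1))) =
      fun k : ℤ => (Int.rec (fun n : ℕ => w ^ (n * (n + 1)))
        (fun n : ℕ => w ^ (n * (n + 1))) k : ℂ) := by
  funext k
  cases k with
  | ofNat n =>
    exact zpow_kk w _ _ (by simp only [Int.ofNat_eq_natCast]; push_cast; ring)
  | negSucc n =>
    exact zpow_kk w _ _ (by rw [Int.negSucc_eq]; push_cast; ring)

/-- Same, for norms. -/
lemma int_rec_eq_norm (w : ℂ) :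
    (fun k : ℤ => ‖w ^ (k * (k + 1))‖) =
      fun k : ℤ => (Int.rec (fun n : ℕ => ‖w ^ (n * (n + 1))‖)
        (fun n : ℕ => ‖w ^ (n * (n + 1))‖) k : ℝ) := by
  funext k
  cases k with
  | ofNat n =>
    exact congrArg Norm.norm
      (zpow_kk w _ _ (by simp only [Int.ofNat_eq_natCast]; push_cast; ring))
  | negSucc n =>
    exact congrArg Norm.norm (zpow_kk w _ _ (by rw [Int.negSucc_eq]; push_cast; ring))

lemma summable_norm_psi (w : ℂ) (hw : ‖w‖ < 1) :
    Summable fun n : ℕ => ‖w ^ (n * (n + 1))‖ := by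
  refine Summable.of_nonneg_of_le (fun n => norm_nonneg _) (fun n => ?_)
    (summable_geometric_of_norm_lt_one (by rwa [norm_norm] : ‖‖w‖‖ < 1))
  rw [norm_pow]
  exact pow_le_pow_of_le_one (norm_nonneg w) hw.le (Nat.le_mul_of_pos_right n (Nat.succ_pos n))

open Filter in
/-- Gauss's identity: `∑_{n≥0} w^{n(n+1)} = (w²;w²)_∞ (-w²;w²)_∞²`. -/
lemma gauss (w : ℂ) (hw : ‖w‖ < 1) (hw0 : w ≠ 0) :
    ∑' n : ℕ, w ^ (n * (n + 1)) =
      (∏' j : ℕ, (1 - (w ^ 2) ^ (j + 1))) * (∏' j : ℕ, (1 + (w ^ 2) ^ (j + 1))) ^ 2 := by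
  have hu : ‖w ^ 2‖ < 1 := by
    rw [norm_pow]; exact pow_lt_one₀ (norm_nonneg w) hw two_ne_zero
  have hu0 : (w ^ 2) ≠ 0 := pow_ne_zero 2 hw0
  have hPne : (∏' j : ℕ, (1 - (w ^ 2) ^ (j + 1))) ≠ 0 := Pinf_ne _ hu
  have hψsum : Summable fun n : ℕ => w ^ (n * (n + 1)) := (summable_norm_psi w hw).of_norm
  have hZ : HasSum (fun k : ℤ => w ^ (k * (k + 1)))
      ((∑' n : ℕ, w ^ (n * (n + 1))) + (∑' n : ℕ, w ^ (n * (n + 1)))) := by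
    rw [int_rec_eq w]
    exact HasSum.int_rec hψsum.hasSum hψsum.hasSum
  have hZnorm : Summable fun k : ℤ => ‖w ^ (k * (k + 1))‖ := by
    rw [int_rec_eq_norm w]
    exact (HasSum.int_rec (summable_norm_psi w hw).hasSum
      (summable_norm_psi w hw).hasSum).summable
  -- Tannery / dominated convergence
  have hb : Summable (fun k : ℤ =>
      Real.exp (3 * (∑' j : ℕ, ‖Complex.log (1 - (w ^ 2) ^ (j + 1))‖))
      * ‖w ^ (k * (k + 1))‖) := hZnorm.mul_left _
  have h2 : ∀ k : ℤ, Tendsto (fun n : ℕ => GBin (w ^ 2) (2 * n) ((n : ℤ) + k)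
      * w ^ (k * (k + 1))) atTop
      (nhds ((∏' j : ℕ, (1 - (w ^ 2) ^ (j + 1))) /
        ((∏' j : ℕ, (1 - (w ^ 2) ^ (j + 1))) * (∏' j : ℕ, (1 - (w ^ 2) ^ (j + 1))))
        * w ^ (k * (k + 1)))) :=
    fun k => (GBin_tendsto (w ^ 2) hu k).mul_const _
  have h3 : ∀ᶠ (n : ℕ) in atTop, ∀ k : ℤ,
      ‖GBin (w ^ 2) (2 * n) ((n : ℤ) + k) * w ^ (k * (k + 1))‖ ≤
      Real.exp (3 * (∑' j : ℕ, ‖Complex.log (1 - (w ^ 2) ^ (j + 1))‖))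
        * ‖w ^ (k * (k + 1))‖ := by
    refine Eventually.of_forall fun n k => ?_
    rw [norm_mul]
    exact mul_le_mul_of_nonneg_right (GBin_bound _ hu _ _) (norm_nonneg _)
  have htan := tendsto_tsum_of_dominated_convergence hb h2 h3
  have heq : (fun n : ℕ => ∑' k : ℤ, GBin (w ^ 2) (2 * n) ((n : ℤ) + k) * w ^ (k * (k + 1)))
      = fun n => SgS w n := by
    funext n
    rw [SgS]
    refine tsum_eq_sum fun k hk => ?_
    simp only [Finset.mem_Icc, not_and_or, not_le] at hk
    rw [GBin_out _ _ _ (by push_cast; omega), zero_mul]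
  rw [heq] at htan
  -- product limit
  have m1 : Multipliable fun j : ℕ => 1 + w ^ (2 * j + 2) :=
    mult_one_add _ (summable_pow_aux w hw 2 2 two_ne_zero)
      (fun j => one_add_pow_ne w hw _)
  have m2 : Multipliable fun j : ℕ => 1 + w ^ (2 * j) :=
    mult_one_add _ (summable_pow_aux w hw 2 0 two_ne_zero)
      (fun j => one_add_pow_ne w hw _)
  have mg : Multipliable fun j : ℕ => (1 + w ^ (2 * j + 2)) * (1 + w ^ (2 * j)) := m1.mul m2
  have hprod : Tendsto (fun n => SgS w n) atTop
      (nhds (∏' j : ℕ, ((1 + w ^ (2 * j + 2)) * (1 + w ^ (2 * j))))) := by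
    have hSgeq : (fun n => SgS w n) = fun n =>
        ∏ j ∈ Finset.range n, ((1 + w ^ (2 * j + 2)) * (1 + w ^ (2 * j))) := by
      funext n; exact SgF w hw hw0 n
    rw [hSgeq]
    exact mg.hasProd.tendsto_prod_nat
  -- identify the limits
  have hmain : (∏' j : ℕ, ((1 + w ^ (2 * j + 2)) * (1 + w ^ (2 * j))))
      = (∏' j : ℕ, (1 - (w ^ 2) ^ (j + 1))) /
        ((∏' j : ℕ, (1 - (w ^ 2) ^ (j + 1))) * (∏' j : ℕ, (1 - (w ^ 2) ^ (j + 1))))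
        * ((∑' n : ℕ, w ^ (n * (n + 1))) + (∑' n : ℕ, w ^ (n * (n + 1)))) := by
    rw [← hZ.tsum_eq, ← tsum_mul_left]
    exact tendsto_nhds_unique hprod htan
  -- shift the second product
  have hshift : (∏' j : ℕ, (1 + w ^ (2 * j))) = 2 * ∏' j : ℕ, (1 + w ^ (2 * j + 2)) := by
    have m2' : Multipliable fun j : ℕ => (fun i : ℕ => 1 + w ^ (2 * i)) (j + 1) := by
      refine m1.congr fun j => ?_
      show 1 + w ^ (2 * j + 2) = 1 + w ^ (2 * (j + 1))
      rw [show 2 * (j + 1) = 2 * j + 2 by ring]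
    rw [tprod_eq_zero_mul' (f := fun i : ℕ => 1 + w ^ (2 * i)) m2']
    norm_num
    exact tprod_congr fun j => by rw [show 2 * (j + 1) = 2 * j + 2 by ring]
  rw [m1.tprod_mul m2, hshift] at hmain
  have hA : (∏' j : ℕ, (1 + w ^ (2 * j + 2))) = ∏' j : ℕ, (1 + (w ^ 2) ^ (j + 1)) :=
    tprod_congr fun j => by rw [← pow_mul, show 2 * (j + 1) = 2 * j + 2 by ring]
  rw [hA] at hmain
  have hfin : 2 * ((∏' j : ℕ, (1 + (w ^ 2) ^ (j + 1))) ^ 2 * (∏' j : ℕ, (1 - (w ^ 2) ^ (j + 1))))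
      = 2 * (∑' n : ℕ, w ^ (n * (n + 1))) := by
    rw [div_mul_eq_mul_div, eq_div_iff (mul_ne_zero hPne hPne)] at hmain
    have hcancel : (∏' j : ℕ, (1 - (w ^ 2) ^ (j + 1))) *
        (2 * ((∏' j : ℕ, (1 + (w ^ 2) ^ (j + 1))) ^ 2 * (∏' j : ℕ, (1 - (w ^ 2) ^ (j + 1)))))
        = (∏' j : ℕ, (1 - (w ^ 2) ^ (j + 1))) * (2 * (∑' n : ℕ, w ^ (n * (n + 1)))) := by
      linear_combination hmain
    exact mul_left_cancel₀ hPne hcancel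
  have hcan := mul_left_cancel₀ (two_ne_zero' ℂ) hfin
  rw [← hcan]
  ring


/-- `η(16τ)² / η(8τ) = Σ_{n ≥ 0} q^{(2n+1)²}` with `q = e^{2πiτ}`, on the upper half-plane. -/
theorem stmt10 (τ : ℂ) (hτ : 0 < τ.im) :
    dedekindEta (16 * τ) ^ 2 / dedekindEta (8 * τ) =
      ∑' n : ℕ, Complex.exp (2 * π * I * τ) ^ ((2 * n + 1) ^ 2) := by
  set q : ℂ := Complex.exp (2 * Real.pi * I * τ) with hqdef
  have hq0 : q ≠ 0 := Complex.exp_ne_zero _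
  have hq : ‖q‖ < 1 := by
    rw [hqdef, Complex.norm_exp]
    have hre : (2 * ↑Real.pi * I * τ).re = -(2 * Real.pi * τ.im) := by
      simp [Complex.mul_re, Complex.mul_im]
      try ring
    rw [hre, ← Real.exp_zero]
    apply Real.exp_lt_exp.mpr
    nlinarith [Real.pi_pos]
  have hw : ‖q ^ 4‖ < 1 := by
    rw [norm_pow]; exact pow_lt_one₀ (norm_nonneg q) hq (by norm_num)
  have hw0 : q ^ 4 ≠ 0 := pow_ne_zero _ hq0
  have hu : ‖q ^ 8‖ < 1 := by
    rw [norm_pow]; exact pow_lt_one₀ (norm_nonneg q) hq (by norm_num)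
  have hu0 : q ^ 8 ≠ 0 := pow_ne_zero _ hq0
  have hPne : (∏' j : ℕ, (1 - (q ^ 8) ^ (j + 1))) ≠ 0 := Pinf_ne _ hu
  have multP : Multipliable fun j : ℕ => 1 - (q ^ 8) ^ (j + 1) := mult_PP _ hu
  have multA : Multipliable fun j : ℕ => 1 + (q ^ 8) ^ (j + 1) := by
    refine mult_one_add _ ?_ (fun j => one_add_pow_ne (q ^ 8) hu (j + 1))
    simpa using summable_pow_aux (q ^ 8) hu 1 1 one_ne_zero
  -- the eta factors
  have hexp16 : Complex.exp (2 * ↑Real.pi * I * (16 * τ)) = q ^ 16 := by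
    rw [hqdef, ← Complex.exp_nat_mul]
    congr 1
    push_cast
    ring
  have hexp8 : Complex.exp (2 * ↑Real.pi * I * (8 * τ)) = q ^ 8 := by
    rw [hqdef, ← Complex.exp_nat_mul]
    congr 1
    push_cast
    ring
  have hEta16 : dedekindEta (16 * τ) = Complex.exp (↑Real.pi * I * (16 * τ) / 12) *
      ((∏' j : ℕ, (1 - (q ^ 8) ^ (j + 1))) * (∏' j : ℕ, (1 + (q ^ 8) ^ (j + 1)))) := by
    rw [dedekindEta, hexp16]
    congr 1
    rw [← multP.tprod_mul multA]
    refine tprod_congr fun j => ?_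
    ring
  have hEta8 : dedekindEta (8 * τ) = Complex.exp (↑Real.pi * I * (8 * τ) / 12) *
      (∏' j : ℕ, (1 - (q ^ 8) ^ (j + 1))) := by
    rw [dedekindEta, hexp8]
  -- the exponential prefactor
  have hE : Complex.exp (↑Real.pi * I * (16 * τ) / 12) ^ 2 =
      q * Complex.exp (↑Real.pi * I * (8 * τ) / 12) := by
    rw [hqdef, ← Complex.exp_nat_mul, ← Complex.exp_add]
    congr 1
    push_cast
    ring
  -- Gauss's identity in terms of q
  have hGauss : (∑' n : ℕ, (q ^ 4) ^ (n * (n + 1))) =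
      (∏' j : ℕ, (1 - (q ^ 8) ^ (j + 1))) * (∏' j : ℕ, (1 + (q ^ 8) ^ (j + 1))) ^ 2 := by
    rw [gauss (q ^ 4) hw hw0]
    congr 1
    · exact tprod_congr fun j => by rw [show ((q ^ 4) ^ 2 : ℂ) = q ^ 8 by ring]
    · congr 1
      exact tprod_congr fun j => by rw [show ((q ^ 4) ^ 2 : ℂ) = q ^ 8 by ring]
  -- assemble
  rw [hEta16, hEta8]
  have hEne : Complex.exp (↑Real.pi * I * (8 * τ) / 12) ≠ 0 := Complex.exp_ne_zero _
  have hstep : (Complex.exp (↑Real.pi * I * (16 * τ) / 12) *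
      ((∏' j : ℕ, (1 - (q ^ 8) ^ (j + 1))) * (∏' j : ℕ, (1 + (q ^ 8) ^ (j + 1))))) ^ 2 /
      (Complex.exp (↑Real.pi * I * (8 * τ) / 12) * (∏' j : ℕ, (1 - (q ^ 8) ^ (j + 1))))
      = q * ((∏' j : ℕ, (1 - (q ^ 8) ^ (j + 1))) * (∏' j : ℕ, (1 + (q ^ 8) ^ (j + 1))) ^ 2) := by
    rw [div_eq_iff (mul_ne_zero hEne hPne)]
    linear_combination (∏' j : ℕ, (1 - (q ^ 8) ^ (j + 1))) ^ 2 *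
      (∏' j : ℕ, (1 + (q ^ 8) ^ (j + 1))) ^ 2 * hE
  rw [hstep, ← hGauss, ← tsum_mul_left]
  refine tsum_congr fun n => ?_
  rw [← pow_mul, show (2 * n + 1) ^ 2 = 4 * (n * (n + 1)) + 1 by ring, pow_succ]
  ring
end

section
/- In SL₂(ℤ), the matrix identity S⁻¹ T⁻² S = (1 0; 2 1) holds, where S = (0 −1; 1 0) and T = (1 1; 0 1); consequently the subgroup generated by T and (1 0; 2 1) is Γ₀(2), the group of integer matrices (a b; c d) with determinant 1 and c ≡ 0 (mod 2). -/
open Matrix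

open scoped MatrixGroups

/-- `S = (0 −1; 1 0) ∈ SL₂(ℤ)`. -/
def Smat : SL(2, ℤ) := ⟨!![0, -1; 1, 0], by norm_num [Matrix.det_fin_two_of]⟩

/-- `T = (1 1; 0 1) ∈ SL₂(ℤ)`. -/
def Tmat : SL(2, ℤ) := ⟨!![1, 1; 0, 1], by norm_num [Matrix.det_fin_two_of]⟩

/-- `L = (1 0; 2 1) ∈ SL₂(ℤ)`. -/
def Lmat : SL(2, ℤ) := ⟨!![1, 0; 2, 1], by norm_num [Matrix.det_fin_two_of]⟩


lemma Tmat_eq : Tmat = ModularGroup.T := by ext i j; fin_cases i <;> fin_cases j <;> rfl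

lemma coe_T_zpow (n : ℤ) : ((Tmat ^ n : SL(2,ℤ)) : Matrix (Fin 2) (Fin 2) ℤ) = !![1, n; 0, 1] := by
  rw [Tmat_eq]; exact ModularGroup.coe_T_zpow n

lemma coe_L_inv : ((Lmat⁻¹ : SL(2,ℤ)) : Matrix (Fin 2) (Fin 2) ℤ) = !![1,0;-2,1] := by
  rw [Matrix.SpecialLinearGroup.SL2_inv_expl]; rfl

lemma coe_L_zpow (n : ℤ) : ((Lmat ^ n : SL(2,ℤ)) : Matrix (Fin 2) (Fin 2) ℤ) = !![1, 0; 2*n, 1] := by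
  induction n using Int.induction_on with
  | zero => simp; ext i j; fin_cases i <;> fin_cases j <;> simp [Matrix.one_apply]
  | succ k ih =>
      rw [_root_.zpow_add_one, Matrix.SpecialLinearGroup.coe_mul, ih]
      ext i j; fin_cases i <;> fin_cases j <;>
        (simp [Lmat, Matrix.mul_apply, Fin.sum_univ_two]; try ring)
  | pred k ih =>
      rw [_root_.zpow_sub_one, Matrix.SpecialLinearGroup.coe_mul, ih, coe_L_inv]
      ext i j; fin_cases i <;> fin_cases j <;>
        (simp [Matrix.mul_apply, Fin.sum_univ_two]; try ring)

lemma T_mul_00 (n : ℤ) (M : SL(2,ℤ)) : (Tmat ^ n * M).1 0 0 = M.1 0 0 + n * M.1 1 0 := by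
  rw [Matrix.SpecialLinearGroup.coe_mul, coe_T_zpow]
  simp [Matrix.mul_apply, Fin.sum_univ_two]

lemma T_mul_10 (n : ℤ) (M : SL(2,ℤ)) : (Tmat ^ n * M).1 1 0 = M.1 1 0 := by
  rw [Matrix.SpecialLinearGroup.coe_mul, coe_T_zpow]
  simp [Matrix.mul_apply, Fin.sum_univ_two]

lemma L_mul_00 (n : ℤ) (M : SL(2,ℤ)) : (Lmat ^ n * M).1 0 0 = M.1 0 0 := by
  rw [Matrix.SpecialLinearGroup.coe_mul, coe_L_zpow]
  simp [Matrix.mul_apply, Fin.sum_univ_two]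

lemma L_mul_10 (n : ℤ) (M : SL(2,ℤ)) : (Lmat ^ n * M).1 1 0 = 2 * n * M.1 0 0 + M.1 1 0 := by
  rw [Matrix.SpecialLinearGroup.coe_mul, coe_L_zpow]
  simp [Matrix.mul_apply, Fin.sum_univ_two]

lemma key : ∀ n : ℕ, ∀ M : SL(2,ℤ), (M.1 1 0).natAbs = n → (2 : ℤ) ∣ M.1 1 0 →
    M ∈ Subgroup.closure {Tmat, Lmat} := by
  intro n
  induction n using Nat.strong_induction_on with
  | _ n ih =>
    intro M hn hdvd
    set H := Subgroup.closure {Tmat, Lmat} with hH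
    have hT : Tmat ∈ H := Subgroup.subset_closure (by simp)
    have hL : Lmat ∈ H := Subgroup.subset_closure (by simp)
    have hdet : M.1 0 0 * M.1 1 1 - M.1 0 1 * M.1 1 0 = 1 := by
      have := M.2; rwa [Matrix.det_fin_two] at this
    by_cases hc : M.1 1 0 = 0
    · have had : M.1 0 0 * M.1 1 1 = 1 := by rw [hc] at hdet; linarith
      have hW : (Tmat * Lmat⁻¹ * Tmat * Lmat⁻¹ : SL(2,ℤ)).1 = !![-1,0;0,-1] := by
        simp only [Matrix.SpecialLinearGroup.coe_mul, coe_L_inv]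
        ext i j; fin_cases i <;> fin_cases j <;>
          simp [Tmat, Matrix.mul_apply, Fin.sum_univ_two]
      have hWmem : (Tmat * Lmat⁻¹ * Tmat * Lmat⁻¹ : SL(2,ℤ)) ∈ H :=
        H.mul_mem (H.mul_mem (H.mul_mem hT (H.inv_mem hL)) hT) (H.inv_mem hL)
      rcases Int.eq_one_or_neg_one_of_mul_eq_one' had with ⟨h1, h2⟩ | ⟨h1, h2⟩
      · have : M = Tmat ^ (M.1 0 1) := by
          apply Subtype.ext
          rw [coe_T_zpow]
          ext i j; fin_cases i <;> fin_cases j <;> simp [hc, h1, h2]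
        rw [this]; exact H.zpow_mem hT _
      · have : M = (Tmat * Lmat⁻¹ * Tmat * Lmat⁻¹) * Tmat ^ (-(M.1 0 1)) := by
          apply Subtype.ext
          rw [Matrix.SpecialLinearGroup.coe_mul, hW, coe_T_zpow]
          ext i j; fin_cases i <;> fin_cases j <;>
            (simp [Matrix.mul_apply, Fin.sum_univ_two, hc, h1, h2]; try ring)
        rw [this]
        exact H.mul_mem hWmem (H.zpow_mem hT _)
    · -- a is odd
      have ha : ¬ (2:ℤ) ∣ M.1 0 0 := by
        intro h2
        have : (2:ℤ) ∣ 1 := by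
          rw [← hdet]
          exact dvd_sub (Dvd.dvd.mul_right h2 _) (Dvd.dvd.mul_left hdvd _)
        norm_num at this
      set c := M.1 1 0 with hc0
      set n1 : ℤ := -(M.1 0 0 / c) with hn1
      set a' : ℤ := M.1 0 0 % c with ha'
      have ha'eq : M.1 0 0 + n1 * c = a' := by
        rw [hn1, ha']; rw [Int.emod_def]; ring
      have ha'odd : ¬ (2:ℤ) ∣ a' := by
        intro h2; apply ha
        have : M.1 0 0 = a' - n1 * c := by omega
        rw [this]; exact dvd_sub h2 (Dvd.dvd.mul_left hdvd _)
      have ha'pos : 0 < a' := by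
        rcases Int.emod_nonneg (M.1 0 0) hc with h
        rcases h.lt_or_eq with h | h
        · exact h
        · exact absurd (show (2:ℤ) ∣ a' from ⟨0, by omega⟩) ha'odd
      have ha'lt : a' < |c| := Int.emod_lt_abs (M.1 0 0) hc
      -- choose m, c' with c + 2*a'*m = c' and |c'| ≤ a'
      set q : ℤ := c / (2 * a') with hq
      set r : ℤ := c % (2 * a') with hr
      have hrq : c = 2 * a' * q + r := (Int.mul_ediv_add_emod c (2*a')).symm
      have hr0 : 0 ≤ r := Int.emod_nonneg _ (by positivity)
      have hrlt : r < 2 * a' := Int.emod_lt_of_pos _ (by positivity)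
      obtain ⟨m, c', hmc, hc'le⟩ : ∃ m c' : ℤ, c + 2 * a' * m = c' ∧ |c'| ≤ a' := by
        by_cases hra : r ≤ a'
        · exact ⟨-q, r, by rw [hrq]; ring, by rwa [abs_of_nonneg hr0]⟩
        · exact ⟨-q - 1, r - 2 * a', by rw [hrq]; ring,
            by rw [abs_of_nonpos (by omega)]; omega⟩
      have hc'dvd : (2:ℤ) ∣ c' := by
        rw [← hmc]; exact dvd_add hdvd ⟨a' * m, by ring⟩
      set M' : SL(2,ℤ) := Lmat ^ m * (Tmat ^ n1 * M) with hM'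
      have hM'10 : M'.1 1 0 = c' := by
        rw [hM', L_mul_10, T_mul_00, T_mul_10, ha'eq, ← hmc]; ring
      have hM'mem : M' ∈ H := by
        apply ih (c'.natAbs) _ M' (by rw [hM'10]) (by rw [hM'10]; exact hc'dvd)
        rw [← hn]
        have : (c'.natAbs : ℤ) < (c.natAbs : ℤ) := by
          rw [← Int.abs_eq_natAbs, ← Int.abs_eq_natAbs]
          exact lt_of_le_of_lt hc'le ha'lt
        exact_mod_cast this
      have : M = Tmat ^ (-n1) * (Lmat ^ (-m) * M') := by
        rw [hM']; group
      rw [this]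
      exact H.mul_mem (H.zpow_mem hT _) (H.mul_mem (H.zpow_mem hL _) hM'mem)

/-- `S⁻¹ T⁻² S = (1 0; 2 1)`, and `T` together with `(1 0; 2 1)` generate `Γ₀(2)`. -/
theorem stmt15 :
    Smat⁻¹ * Tmat ^ (-2 : ℤ) * Smat = Lmat ∧
      Subgroup.closure {Tmat, Lmat} = CongruenceSubgroup.Gamma0 2 := by
  constructor
  · apply Subtype.ext
    have hSinv : ((Smat⁻¹ : SL(2,ℤ)) : Matrix (Fin 2) (Fin 2) ℤ) = !![0,1;-1,0] := by
      rw [Matrix.SpecialLinearGroup.SL2_inv_expl]; rfl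
    rw [Matrix.SpecialLinearGroup.coe_mul, Matrix.SpecialLinearGroup.coe_mul, coe_T_zpow, hSinv]
    ext i j; fin_cases i <;> fin_cases j <;>
      simp [Smat, Lmat, Matrix.mul_apply, Fin.sum_univ_two]
  · apply le_antisymm
    · rw [Subgroup.closure_le]
      rintro x hx
      rcases hx with rfl | rfl <;> rw [SetLike.mem_coe, CongruenceSubgroup.Gamma0_mem] <;>
        simp [Tmat, Lmat] <;> decide
    · intro x hx
      have h0 := CongruenceSubgroup.Gamma0_mem.1 hx
      have h2 : (2:ℤ) ∣ x.1 1 0 := by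
        have := (ZMod.intCast_zmod_eq_zero_iff_dvd (x.1 1 0) 2).1 h0
        exact_mod_cast this
      exact key _ x rfl h2
end
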